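/- arXiv:2604.10274 — 3 statements merged into one kernel-verified Lean document; each statement's English description precedes it below -/
import Mathlib

section
/- In the symmetric density decomposition setting, fix ι ∈ {0,1} and let K_ι be a measurable probability kernel from Ω_ῑ to Ω_ι such that K_ι(y, N_ι(y)) = 1 for ν_ῑ^⊥-almost every y ∈ Ω_ῑ. Then the measure on Ω_ι given by A ↦ ∫_{Ω_ῑ} K_ι(y, A) dν_ῑ^⊥(y) is mutually singular with ν_ι. -/
/- STATEMENT 15: Backward transport preserves singularity
(Lemma `singular_payload_stays_singular_under_backward_kernel`), in the symmetric density
decomposition setting.  "Fix ι ∈ {0,1}" is rendered as the conjunction of the two cases. -/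

open MeasureTheory ProbabilityTheory Filter
open scoped ENNReal NNReal

noncomputable section

variable {Ω0 Ω1 : Type} [MeasurableSpace Ω0] [MeasurableSpace Ω1]

/-- Side-0 refinements: finite plans concentrated on `E` with first marginal `ν0`. -/
def Plans0 (E : Set (Ω0 × Ω1)) (ν0 : Measure Ω0) : Set (Measure (Ω0 × Ω1)) :=
  {π | IsFiniteMeasure π ∧ π Eᶜ = 0 ∧ π.map Prod.fst = ν0}

/-- Side-1 refinements: finite plans concentrated on `E` with second marginal `ν1`. -/
def Plans1 (E : Set (Ω0 × Ω1)) (ν1 : Measure Ω1) : Set (Measure (Ω0 × Ω1)) :=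
  {π | IsFiniteMeasure π ∧ π Eᶜ = 0 ∧ π.map Prod.snd = ν1}

/-- Capped feasible subplans for side-0 refinements (cap on side 1). -/
def Feas0 (E : Set (Ω0 × Ω1)) (ν0 : Measure Ω0) (ν1 : Measure Ω1) (t : ℝ) :
    Set (Measure (Ω0 × Ω1)) :=
  {σ | IsFiniteMeasure σ ∧ σ Eᶜ = 0 ∧ σ.map Prod.fst ≤ ν0 ∧
    σ.map Prod.snd ≤ (ENNReal.ofReal t) • ν1}

def Fit0 (E : Set (Ω0 × Ω1)) (ν0 : Measure Ω0) (ν1 : Measure Ω1) (t : ℝ) : ℝ≥0∞ :=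
  ⨆ σ ∈ Feas0 E ν0 ν1 t, σ Set.univ

/-- Level-optimal maximin from side 0 to side 1. -/
def LevelOpt0 (E : Set (Ω0 × Ω1)) (ν0 : Measure Ω0) (ν1 : Measure Ω1)
    (π : Measure (Ω0 × Ω1)) : Prop :=
  ∀ t : ℝ, 0 < t →
    ∫⁻ y, min ((π.map Prod.snd).rnDeriv ν1 y) (ENNReal.ofReal t) ∂ν1 = Fit0 E ν0 ν1 t

/-- Capped feasible subplans for side-1 refinements (cap on side 0). -/
def Feas1 (E : Set (Ω0 × Ω1)) (ν0 : Measure Ω0) (ν1 : Measure Ω1) (t : ℝ) :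
    Set (Measure (Ω0 × Ω1)) :=
  {σ | IsFiniteMeasure σ ∧ σ Eᶜ = 0 ∧ σ.map Prod.snd ≤ ν1 ∧
    σ.map Prod.fst ≤ (ENNReal.ofReal t) • ν0}

def Fit1 (E : Set (Ω0 × Ω1)) (ν0 : Measure Ω0) (ν1 : Measure Ω1) (t : ℝ) : ℝ≥0∞ :=
  ⨆ σ ∈ Feas1 E ν0 ν1 t, σ Set.univ

/-- Level-optimal maximin from side 1 to side 0. -/
def LevelOpt1 (E : Set (Ω0 × Ω1)) (ν0 : Measure Ω0) (ν1 : Measure Ω1)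
    (π : Measure (Ω0 × Ω1)) : Prop :=
  ∀ t : ℝ, 0 < t →
    ∫⁻ x, min ((π.map Prod.fst).rnDeriv ν0 x) (ENNReal.ofReal t) ∂ν0 = Fit1 E ν0 ν1 t

lemma aux_singular {α β : Type} [MeasurableSpace α] [MeasurableSpace β]
    (E' : Set (α × β)) (hE' : MeasurableSet E')
    (να : Measure α) (νβ : Measure β) [IsFiniteMeasure να] [IsFiniteMeasure νβ]
    (π : Measure (α × β)) [IsFiniteMeasure π]
    (hπE : π E'ᶜ = 0) (hπfst : π.map Prod.fst = να)
    (hopt : ∀ t : ℝ, 0 < t → ∀ σ : Measure (α × β), IsFiniteMeasure σ → σ E'ᶜ = 0 →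
      σ.map Prod.fst ≤ να → σ.map Prod.snd ≤ (ENNReal.ofReal t) • νβ →
      σ Set.univ ≤ ∫⁻ y, min ((π.map Prod.snd).rnDeriv νβ y) (ENNReal.ofReal t) ∂νβ)
    (K : Kernel β α) [IsMarkovKernel K]
    (hK : ∀ᵐ y ∂(νβ.singularPart (νβ.withDensity ((π.map Prod.snd).rnDeriv νβ))),
      K y {x : α | (x, y) ∈ E'} = 1) :
    ((νβ.singularPart (νβ.withDensity ((π.map Prod.snd).rnDeriv νβ))).bind
      (fun y => K y)).MutuallySingular να := by
  set P : Measure β := π.map Prod.snd with hPdef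
  set r : β → ℝ≥0∞ := P.rnDeriv νβ with hrdef
  have hmeasr : Measurable r := Measure.measurable_rnDeriv P νβ
  set ρ : Measure β := νβ.withDensity r with hρdef
  set νperp : Measure β := νβ.singularPart ρ with hνperpdef
  have hνperple : νperp ≤ νβ := Measure.singularPart_le νβ ρ
  haveI : IsFiniteMeasure νperp := isFiniteMeasure_of_le νβ hνperple
  set μ : Measure α := νperp.bind (fun y => K y) with hμdef
  have hμuniv : μ Set.univ = νperp Set.univ := by
    rw [hμdef, Measure.bind_apply MeasurableSet.univ K.measurable.aemeasurable]
    simp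
  haveI : IsFiniteMeasure μ := ⟨hμuniv ▸ measure_lt_top νperp Set.univ⟩
  by_contra hcon
  -- Lebesgue decomposition of μ w.r.t. να
  set f : α → ℝ≥0∞ := μ.rnDeriv να with hfdef
  have hmeasF : Measurable f := Measure.measurable_rnDeriv μ να
  set ξ : Measure α := να.withDensity f with hξdef
  set sp : Measure α := μ.singularPart να with hspdef
  have hdec : μ = sp + ξ := μ.haveLebesgueDecomposition_add να
  have hsp : sp ⟂ₘ να := μ.mutuallySingular_singularPart να
  have hξne : ξ ≠ 0 := by
    intro h0
    exact hcon (by rw [hdec, h0, add_zero]; exact hsp)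
  have hξpos : 0 < ξ Set.univ := Measure.measure_univ_pos.2 hξne
  have hξac : ξ ≪ να := withDensity_absolutelyContinuous να f
  obtain ⟨N, hNm, hspN, hναNc⟩ := hsp
  -- find a level n with positive mass
  have hflt : ∀ᵐ x ∂να, f x < ∞ := Measure.rnDeriv_lt_top μ να
  have hνainf : να {x | f x = ∞} = 0 := by
    have := ae_iff.1 hflt
    simpa [not_lt, top_le_iff] using this
  have hexn : ∃ n : ℕ, ξ (N ∩ {x | f x ≤ (n : ℝ≥0∞)}) ≠ 0 := by
    by_contra hall
    push_neg at hall
    have hcov : Set.univ ⊆ (⋃ n : ℕ, N ∩ {x | f x ≤ (n : ℝ≥0∞)}) ∪ (Nᶜ ∪ {x | f x = ∞}) := by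
      intro x _
      by_cases hxN : x ∈ N
      · by_cases hxf : f x = ∞
        · exact Or.inr (Or.inr hxf)
        · obtain ⟨n, hn⟩ := ENNReal.exists_nat_gt hxf
          exact Or.inl (Set.mem_iUnion.2 ⟨n, hxN, hn.le⟩)
      · exact Or.inr (Or.inl hxN)
    have hzero : ξ Set.univ = 0 := by
      refine le_antisymm ?_ (zero_le)
      calc ξ Set.univ
          ≤ ξ ((⋃ n : ℕ, N ∩ {x | f x ≤ (n : ℝ≥0∞)}) ∪ (Nᶜ ∪ {x | f x = ∞})) :=
            measure_mono hcov
        _ ≤ ξ (⋃ n : ℕ, N ∩ {x | f x ≤ (n : ℝ≥0∞)}) + (ξ Nᶜ + ξ {x | f x = ∞}) :=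
            le_trans (measure_union_le _ _) (by gcongr; exact measure_union_le _ _)
        _ = 0 := by
            rw [measure_iUnion_null hall, hξac hναNc, hξac hνainf]; simp
    exact absurd hzero hξpos.ne'
  obtain ⟨n, hn⟩ := hexn
  set M : ℝ≥0∞ := (n : ℝ≥0∞) with hMdef
  have hMtop : M ≠ ∞ := by simp [hMdef]
  set B : Set α := N ∩ {x | f x ≤ M} with hBdef
  have hBm : MeasurableSet B := hNm.inter (hmeasF measurableSet_Iic)
  set m : ℝ≥0∞ := μ B with hmdef
  have hm : 0 < m := by
    have hmB : μ B = sp B + ξ B := by rw [hdec]; rfl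
    rw [hmdef, hmB]
    exact lt_of_lt_of_le (pos_iff_ne_zero.2 hn) le_add_self
  have hmtop : m ≠ ∞ := (measure_lt_top μ B).ne
  have hrB : μ.restrict B ≤ M • να := by
    refine Measure.le_iff.2 fun A hA => ?_
    rw [Measure.restrict_apply hA, Measure.smul_apply, smul_eq_mul]
    have h1 : μ (A ∩ B) = sp (A ∩ B) + ξ (A ∩ B) := by rw [hdec]; rfl
    have h2 : sp (A ∩ B) = 0 :=
      le_antisymm (le_trans (measure_mono (fun x hx => hx.2.1)) hspN.le) (zero_le)
    have h3 : ξ (A ∩ B) ≤ M * να A := by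
      rw [hξdef, withDensity_apply _ (hA.inter hBm)]
      calc ∫⁻ x in A ∩ B, f x ∂να ≤ ∫⁻ _ in A ∩ B, M ∂να :=
            setLIntegral_mono measurable_const fun x hx => hx.2.2
        _ = M * να (A ∩ B) := setLIntegral_const _ _
        _ ≤ M * να A := mul_le_mul_right (measure_mono Set.inter_subset_left) M
    rw [h1, h2, zero_add]; exact h3
  -- the backward-transport coupling τ
  set τ : Measure (α × β) := (νperp ⊗ₘ K).map Prod.swap with hτdef
  have hswapm : Measurable (Prod.swap : β × α → α × β) := measurable_swap
  have hτfst : τ.map Prod.fst = μ := by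
    ext s hs
    rw [Measure.map_apply measurable_fst hs, hτdef,
      Measure.map_apply hswapm (measurable_fst hs),
      show Prod.swap ⁻¹' (Prod.fst ⁻¹' s) = Prod.snd ⁻¹' s from rfl,
      Measure.compProd_apply (measurable_snd hs), hμdef,
      Measure.bind_apply hs K.measurable.aemeasurable]
    rfl
  have hτsnd : τ.map Prod.snd = νperp := by
    ext s hs
    rw [Measure.map_apply measurable_snd hs, hτdef,
      Measure.map_apply hswapm (measurable_snd hs),
      show Prod.swap ⁻¹' (Prod.snd ⁻¹' s) = Prod.fst ⁻¹' s from rfl,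
      Measure.compProd_apply (measurable_fst hs)]
    have hind : (fun y => K y (Prod.mk y ⁻¹' (Prod.fst ⁻¹' s))) = s.indicator (fun _ => 1) := by
      funext y
      by_cases hy : y ∈ s
      · rw [Set.indicator_of_mem hy]
        have hu : Prod.mk y ⁻¹' (Prod.fst ⁻¹' s : Set (β × α)) = Set.univ := by
          ext x; simp [hy]
        rw [hu]
        simp
      · rw [Set.indicator_of_notMem hy]
        have he : Prod.mk y ⁻¹' (Prod.fst ⁻¹' s : Set (β × α)) = ∅ := by
          ext x; simp [hy]
        rw [he]
        simp
    rw [hind, lintegral_indicator hs]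
    simpa using setLIntegral_one s
  have hτE : τ E'ᶜ = 0 := by
    rw [hτdef, Measure.map_apply hswapm hE'.compl,
      Measure.compProd_apply (hswapm hE'.compl)]
    have hae : ∀ᵐ y ∂νperp, K y (Prod.mk y ⁻¹' (Prod.swap ⁻¹' E'ᶜ)) = 0 := by
      filter_upwards [hK] with y hy
      have hset : Prod.mk y ⁻¹' (Prod.swap ⁻¹' E'ᶜ) = {x : α | (x, y) ∈ E'}ᶜ := rfl
      have hmeas : MeasurableSet {x : α | (x, y) ∈ E'} := measurable_prodMk_right hE'
      rw [hset, measure_compl hmeas (measure_ne_top _ _), hy]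
      simp
    rw [lintegral_congr_ae hae, lintegral_zero]
  set τ' : Measure (α × β) := τ.restrict (Prod.fst ⁻¹' B) with hτ'def
  have hτ'univ : τ' Set.univ = m := by
    rw [hτ'def, Measure.restrict_apply MeasurableSet.univ, Set.univ_inter,
      ← Measure.map_apply measurable_fst hBm, hτfst]
  have hτ'fst : τ'.map Prod.fst = μ.restrict B := by
    rw [hτ'def, ← Measure.restrict_map measurable_fst hBm, hτfst]
  have hτ'snd : τ'.map Prod.snd ≤ νperp :=
    hτsnd ▸ Measure.map_mono Measure.restrict_le_self measurable_snd
  have hτ'E : τ' E'ᶜ = 0 := by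
    refine le_antisymm ?_ (zero_le)
    rw [hτ'def, Measure.restrict_apply hE'.compl]
    exact le_trans (measure_mono Set.inter_subset_left) hτE.le
  haveI : IsFiniteMeasure τ' := ⟨by rw [hτ'univ]; exact hmtop.lt_top⟩
  -- the singular carrier S on side β
  obtain ⟨s₀, hs₀m, hperps₀, hρs₀c⟩ := νβ.mutuallySingular_singularPart ρ
  set S : Set β := s₀ᶜ with hSdef
  have hSm : MeasurableSet S := hs₀m.compl
  have hνperpSc : νperp Sᶜ = 0 := by rw [hSdef, compl_compl]; exact hperps₀
  have hr0 : r =ᵐ[νβ.restrict S] 0 := by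
    have hint0 : ∫⁻ y in S, r y ∂νβ = 0 := by
      rw [← withDensity_apply r hSm]; exact hρs₀c
    exact (lintegral_eq_zero_iff hmeasr).1 hint0
  -- carrier for the a.c. part of P
  obtain ⟨T, hTm, hPspT, hνβTc⟩ := P.mutuallySingular_singularPart νβ
  have hPdec2 : P = P.singularPart νβ + ρ := P.haveLebesgueDecomposition_add νβ
  -- key quantitative bound
  have key : ∀ t : ℝ, 0 < t → m ≤ M * (ENNReal.ofReal t * νβ Set.univ) := by
    intro t ht
    set a : ℝ≥0∞ := ENNReal.ofReal t with ha
    have ha0 : a ≠ 0 := (ENNReal.ofReal_pos.2 ht).ne'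
    have hatop : a ≠ ∞ := ENNReal.ofReal_ne_top
    set g : β → ℝ≥0∞ := T.indicator (fun y => min 1 (a * (r y)⁻¹)) with hgdef
    have hgmeas : Measurable g := (measurable_const.min (hmeasr.inv.const_mul a)).indicator hTm
    have hg1 : ∀ y, g y ≤ 1 := by
      intro y
      by_cases h : y ∈ T
      · rw [hgdef]; rw [Set.indicator_of_mem h]; exact min_le_left _ _
      · rw [hgdef]; rw [Set.indicator_of_notMem h]; exact zero_le
    set σ1 : Measure (α × β) := π.withDensity (fun p => g p.2) with hσ1def
    have hσ1le : σ1 ≤ π := by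
      refine Measure.le_iff.2 fun A hA => ?_
      rw [hσ1def, withDensity_apply _ hA]
      calc ∫⁻ p in A, g p.2 ∂π ≤ ∫⁻ _ in A, 1 ∂π :=
            setLIntegral_mono measurable_const fun p _ => hg1 p.2
        _ = π A := setLIntegral_one A
    haveI : IsFiniteMeasure σ1 := isFiniteMeasure_of_le π hσ1le
    have hσ1E : σ1 E'ᶜ = 0 :=
      le_antisymm (le_trans (Measure.le_iff'.1 hσ1le E'ᶜ) hπE.le) (zero_le)
    have hσ1fst : σ1.map Prod.fst ≤ να := hπfst ▸ Measure.map_mono hσ1le measurable_fst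
    have hσ1snd : σ1.map Prod.snd = P.withDensity g := by
      ext A hA
      rw [Measure.map_apply measurable_snd hA, hσ1def,
        withDensity_apply _ (measurable_snd hA), withDensity_apply _ hA, hPdef,
        setLIntegral_map hA hgmeas measurable_snd]
    have hgP : P.withDensity g = νβ.withDensity (fun y => min (r y) a) := by
      rw [hPdec2, withDensity_add_measure]
      have h1 : (P.singularPart νβ).withDensity g = 0 := by
        ext A hA
        rw [withDensity_apply _ hA, hgdef, setLIntegral_indicator hTm]
        have hz : (P.singularPart νβ) (T ∩ A) = 0 :=
          le_antisymm (le_trans (measure_mono Set.inter_subset_left) hPspT.le) (zero_le)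
        rw [setLIntegral_measure_zero _ _ hz]
        simp
      rw [h1, zero_add, hρdef, ← withDensity_mul _ hmeasr hgmeas]
      refine withDensity_congr_ae ?_
      have hT1 : ∀ᵐ y ∂νβ, y ∈ T := by
        rw [ae_iff]
        exact hνβTc
      filter_upwards [hT1, P.rnDeriv_lt_top νβ] with y hyT hylt
      simp only [Pi.mul_apply, hgdef, Set.indicator_of_mem hyT]
      rcases eq_or_ne (r y) 0 with h0 | h0
      · rw [h0]
        simp
      · have hinv : r y * (a * (r y)⁻¹) = a := by
          rw [mul_comm a, ← mul_assoc, ENNReal.mul_inv_cancel h0 hylt.ne, one_mul]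
        rcases le_total 1 (a * (r y)⁻¹) with hle | hle
        · have hra : r y ≤ a := by
            have hmul := mul_le_mul_right hle (r y)
            rwa [mul_one, hinv] at hmul
          rw [min_eq_left hle, mul_one, min_eq_left hra]
        · have har : a ≤ r y := by
            have hmul := mul_le_mul_right hle (r y)
            rwa [mul_one, hinv] at hmul
          rw [min_eq_right hle, hinv, min_eq_right har]
    set F : ℝ≥0∞ := ∫⁻ y, min (r y) a ∂νβ with hFdef
    have hσ1univ : σ1 Set.univ = F := by
      calc σ1 Set.univ = (σ1.map Prod.snd) Set.univ := by
            rw [Measure.map_apply measurable_snd MeasurableSet.univ, Set.preimage_univ]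
        _ = F := by
            rw [hσ1snd, hgP, withDensity_apply _ MeasurableSet.univ, Measure.restrict_univ]
    have hFle : F ≤ a * νβ Set.univ := by
      calc F ≤ ∫⁻ _, a ∂νβ := lintegral_mono fun y => min_le_right _ _
        _ = a * νβ Set.univ := lintegral_const a
    have hFtop : F ≠ ∞ :=
      (lt_of_le_of_lt hFle (ENNReal.mul_lt_top hatop.lt_top (measure_lt_top _ _))).ne
    set c : ℝ≥0∞ := (1 + a * M)⁻¹ with hcdef
    have hcsum : (1 + a * M) ≠ 0 := by simp
    have hcsumtop : (1 + a * M) ≠ ∞ := by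
      simp [ENNReal.add_eq_top, ENNReal.mul_eq_top, hatop, hMtop]
    have hcM : c * (1 + a * M) = 1 := ENNReal.inv_mul_cancel hcsum hcsumtop
    have hc1 : c ≤ 1 := by
      rw [hcdef]
      exact ENNReal.inv_le_one.2 le_self_add
    have hctop : c ≠ ∞ := (lt_of_le_of_lt hc1 ENNReal.one_lt_top).ne
    set σ : Measure (α × β) := c • σ1 + (c * a) • τ' with hσdef
    haveI : IsFiniteMeasure σ := by
      constructor
      rw [hσdef]
      simp only [Measure.add_apply, Measure.smul_apply, smul_eq_mul]
      exact ENNReal.add_lt_top.2 ⟨ENNReal.mul_lt_top hctop.lt_top (measure_lt_top _ _),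
        ENNReal.mul_lt_top (ENNReal.mul_lt_top hctop.lt_top hatop.lt_top) (measure_lt_top _ _)⟩
    have hσE : σ E'ᶜ = 0 := by
      rw [hσdef]
      simp [Measure.add_apply, Measure.smul_apply, hσ1E, hτ'E]
    have hσfst : σ.map Prod.fst ≤ να := by
      rw [hσdef, Measure.map_add _ _ measurable_fst, Measure.map_smul, Measure.map_smul]
      refine Measure.le_iff.2 fun A hA => ?_
      simp only [Measure.add_apply, Measure.smul_apply, smul_eq_mul]
      have h1 : (σ1.map Prod.fst) A ≤ να A := Measure.le_iff'.1 hσ1fst A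
      have h2 : (τ'.map Prod.fst) A ≤ M * να A := by
        rw [hτ'fst]
        simpa [smul_eq_mul] using Measure.le_iff'.1 hrB A
      calc c * (σ1.map Prod.fst) A + c * a * (τ'.map Prod.fst) A
          ≤ c * να A + c * a * (M * να A) := by gcongr
        _ = (c * (1 + a * M)) * να A := by ring
        _ = να A := by rw [hcM, one_mul]
    have hσsnd : σ.map Prod.snd ≤ a • νβ := by
      rw [hσdef, Measure.map_add _ _ measurable_snd, Measure.map_smul, Measure.map_smul,
        hσ1snd, hgP]
      refine Measure.le_iff.2 fun A hA => ?_
      simp only [Measure.add_apply, Measure.smul_apply, smul_eq_mul]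
      have hsplit : νβ.withDensity (fun y => min (r y) a) A
          = ∫⁻ y in A ∩ S, min (r y) a ∂νβ + ∫⁻ y in A \ S, min (r y) a ∂νβ := by
        rw [withDensity_apply _ hA]
        rw [show A = (A ∩ S) ∪ (A \ S) by rw [Set.inter_union_diff]]
        rw [lintegral_union (hA.diff hSm) (Set.disjoint_left.2 fun x hx hx' => hx'.2 hx.2)]
        rw [Set.inter_union_diff]
      have h1 : ∫⁻ y in A ∩ S, min (r y) a ∂νβ = 0 := by
        have hae : r =ᵐ[νβ.restrict (A ∩ S)] 0 :=
          ae_restrict_of_ae_restrict_of_subset Set.inter_subset_right hr0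
        calc ∫⁻ y in A ∩ S, min (r y) a ∂νβ
            = ∫⁻ _ in A ∩ S, (0 : ℝ≥0∞) ∂νβ := by
              refine lintegral_congr_ae (hae.mono fun y hy => ?_)
              simp only [Pi.zero_apply] at hy
              simp [hy]
          _ = 0 := lintegral_zero
      have h2 : ∫⁻ y in A \ S, min (r y) a ∂νβ ≤ a * νβ (A \ S) := by
        calc ∫⁻ y in A \ S, min (r y) a ∂νβ ≤ ∫⁻ _ in A \ S, a ∂νβ :=
              setLIntegral_mono measurable_const fun y _ => min_le_right _ _
          _ = a * νβ (A \ S) := setLIntegral_const _ _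
      have h3 : (τ'.map Prod.snd) A ≤ νβ (A ∩ S) := by
        have h31 : (τ'.map Prod.snd) A ≤ νperp A := Measure.le_iff'.1 hτ'snd A
        have h32 : νperp A ≤ νperp (A ∩ S) := by
          have hiad := measure_inter_add_diff (μ := νperp) A hSm
          have hz : νperp (A \ S) = 0 :=
            le_antisymm (le_trans (measure_mono (fun x hx => hx.2)) hνperpSc.le) (zero_le)
          rw [← hiad, hz, add_zero]
        exact le_trans h31 (le_trans h32 (Measure.le_iff'.1 hνperple (A ∩ S)))
      have hle1 : c * (νβ.withDensity (fun y => min (r y) a)) A ≤ a * νβ (A \ S) := by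
        calc c * (νβ.withDensity (fun y => min (r y) a)) A
            ≤ 1 * (νβ.withDensity (fun y => min (r y) a)) A := mul_le_mul_left hc1 _
          _ = (νβ.withDensity (fun y => min (r y) a)) A := one_mul _
          _ = 0 + ∫⁻ y in A \ S, min (r y) a ∂νβ := by rw [hsplit, h1]
          _ ≤ a * νβ (A \ S) := by rw [zero_add]; exact h2
      have hle2 : c * a * (τ'.map Prod.snd) A ≤ a * νβ (A ∩ S) := by
        calc c * a * (τ'.map Prod.snd) A ≤ 1 * a * (τ'.map Prod.snd) A := by gcongr
          _ = a * (τ'.map Prod.snd) A := by rw [one_mul]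
          _ ≤ a * νβ (A ∩ S) := mul_le_mul_right h3 a
      calc c * (νβ.withDensity (fun y => min (r y) a)) A + c * a * (τ'.map Prod.snd) A
          ≤ a * νβ (A \ S) + a * νβ (A ∩ S) := add_le_add hle1 hle2
        _ = a * (νβ (A ∩ S) + νβ (A \ S)) := by ring
        _ = a * νβ A := by rw [measure_inter_add_diff A hSm]
    have hσuniv : σ Set.univ = c * F + c * a * m := by
      rw [hσdef]
      simp only [Measure.add_apply, Measure.smul_apply, smul_eq_mul]
      rw [hσ1univ, hτ'univ]
    have hopt' := hopt t ht σ inferInstance hσE hσfst hσsnd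
    rw [hσuniv] at hopt'
    have hoptF : c * F + c * a * m ≤ F := hopt'
    have h5 : F + a * m ≤ F + a * M * F := by
      have h51 := mul_le_mul_right hoptF (1 + a * M)
      calc F + a * m
          = (1 + a * M) * c * F + (1 + a * M) * c * (a * m) := by
            rw [mul_comm (1 + a * M) c, hcM, one_mul, one_mul]
        _ = (1 + a * M) * (c * F + c * a * m) := by ring
        _ ≤ (1 + a * M) * F := h51
        _ = F + a * M * F := by ring
    have h6 : a * m ≤ a * M * F := (ENNReal.add_le_add_iff_left hFtop).1 h5
    have h7 : m ≤ M * F := by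
      rw [mul_assoc] at h6
      exact (ENNReal.mul_le_mul_iff_right ha0 hatop).1 h6
    exact le_trans h7 (mul_le_mul_right hFle M)
  -- derive the contradiction
  set C : ℝ≥0∞ := M * νβ Set.univ with hCdef
  have hCtop : C ≠ ∞ := ENNReal.mul_ne_top hMtop (measure_ne_top _ _)
  have hkey' : ∀ t : ℝ, 0 < t → m ≤ ENNReal.ofReal t * C := by
    intro t ht
    calc m ≤ M * (ENNReal.ofReal t * νβ Set.univ) := key t ht
      _ = ENNReal.ofReal t * C := by rw [hCdef]; ring
  rcases eq_or_ne C 0 with hC0 | hC0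
  · have h1 := hkey' 1 one_pos
    rw [hC0, mul_zero] at h1
    exact absurd (le_antisymm h1 (zero_le)) hm.ne'
  · set d : ℝ≥0∞ := m / (2 * C) with hd
    have h2C0 : (2 : ℝ≥0∞) * C ≠ 0 := mul_ne_zero two_ne_zero hC0
    have h2Ctop : (2 : ℝ≥0∞) * C ≠ ∞ := ENNReal.mul_ne_top (by simp) hCtop
    have hd0 : d ≠ 0 := by
      rw [hd]
      simp [ENNReal.div_eq_zero_iff, hm.ne', h2Ctop]
    have hdtop : d ≠ ∞ := by
      rw [hd]
      exact (ENNReal.div_lt_top hmtop h2C0).ne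
    have htpos : 0 < d.toReal := ENNReal.toReal_pos hd0 hdtop
    have hfin := hkey' d.toReal htpos
    rw [ENNReal.ofReal_toReal hdtop] at hfin
    have hdc : d * C = m / 2 := by
      calc d * C = m * ((2 : ℝ≥0∞)⁻¹ * C⁻¹) * C := by
            rw [hd, div_eq_mul_inv, ENNReal.mul_inv (Or.inl (by simp)) (Or.inl (by simp))]
        _ = m * (2 : ℝ≥0∞)⁻¹ * (C⁻¹ * C) := by ring
        _ = m * (2 : ℝ≥0∞)⁻¹ := by rw [ENNReal.inv_mul_cancel hC0 hCtop, mul_one]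
        _ = m / 2 := by rw [div_eq_mul_inv]
    rw [hdc] at hfin
    exact absurd hfin (not_le.2 (ENNReal.half_lt_self hm.ne' hmtop))

theorem singular_payload_stays_singular_under_backward_kernel
    [TopologicalSpace Ω0] [PolishSpace Ω0] [BorelSpace Ω0]
    [TopologicalSpace Ω1] [PolishSpace Ω1] [BorelSpace Ω1]
    (E : Set (Ω0 × Ω1)) (hE : IsClosed E)
    (ν0 : Measure Ω0) (ν1 : Measure Ω1) [IsFiniteMeasure ν0] [IsFiniteMeasure ν1]
    (hν0 : 0 < ν0 Set.univ) (hν1 : 0 < ν1 Set.univ)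
    (hNbhd0 : ∀ x : Ω0, ∃ y : Ω1, (x, y) ∈ E) (hNbhd1 : ∀ y : Ω1, ∃ x : Ω0, (x, y) ∈ E)
    (π0 π1 : Measure (Ω0 × Ω1)) (hπ0 : π0 ∈ Plans0 E ν0) (hπ1 : π1 ∈ Plans1 E ν1)
    (hlom0 : LevelOpt0 E ν0 ν1 π0) (hlom1 : LevelOpt1 E ν0 ν1 π1)
    -- symmetric density decomposition data
    (P0 : Measure Ω0) (hP0 : P0 = π1.map Prod.fst)
    (P1 : Measure Ω1) (hP1 : P1 = π0.map Prod.snd)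
    (ν0perp : Measure Ω0) (hν0perp : ν0perp = ν0.singularPart (ν0.withDensity (P0.rnDeriv ν0)))
    (ν1perp : Measure Ω1) (hν1perp : ν1perp = ν1.singularPart (ν1.withDensity (P1.rnDeriv ν1))) :
    -- case ι = 0: kernels from Ω1 to Ω0 carried by the neighborhoods, ν1perp-a.e.
    (∀ K : Kernel Ω1 Ω0, IsMarkovKernel K →
      (∀ᵐ y ∂ν1perp, K y {x : Ω0 | (x, y) ∈ E} = 1) →
      (ν1perp.bind (fun y => K y)).MutuallySingular ν0) ∧
    -- case ι = 1: kernels from Ω0 to Ω1 carried by the neighborhoods, ν0perp-a.e.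
    (∀ K : Kernel Ω0 Ω1, IsMarkovKernel K →
      (∀ᵐ x ∂ν0perp, K x {y : Ω1 | (x, y) ∈ E} = 1) →
      (ν0perp.bind (fun x => K x)).MutuallySingular ν1) := by
  subst hP0 hP1 hν0perp hν1perp
  obtain ⟨hπ0fin, hπ0E, hπ0fst⟩ := hπ0
  obtain ⟨hπ1fin, hπ1E, hπ1snd⟩ := hπ1
  haveI := hπ0fin
  haveI := hπ1fin
  constructor
  · intro K hMarkov hKae
    haveI := hMarkov
    exact aux_singular E hE.measurableSet ν0 ν1 π0 hπ0E hπ0fst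
      (fun t ht σ hσfin hσE hσfst hσsnd => by
        have hmem : σ ∈ Feas0 E ν0 ν1 t := ⟨hσfin, hσE, hσfst, hσsnd⟩
        have hle : σ Set.univ ≤ Fit0 E ν0 ν1 t := le_iSup₂_of_le σ hmem le_rfl
        rwa [← hlom0 t ht] at hle) K hKae
  · intro K hMarkov hKae
    haveI := hMarkov
    have hswap : Measurable (Prod.swap : Ω0 × Ω1 → Ω1 × Ω0) := measurable_swap
    set E' : Set (Ω1 × Ω0) := Prod.swap ⁻¹' E with hE'def
    have hE'm : MeasurableSet E' := measurable_swap hE.measurableSet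
    set π' : Measure (Ω1 × Ω0) := π1.map Prod.swap with hπ'def
    haveI : IsFiniteMeasure π' := by
      constructor
      rw [hπ'def, Measure.map_apply hswap MeasurableSet.univ, Set.preimage_univ]
      exact measure_lt_top π1 _
    have hπ'E : π' E'ᶜ = 0 := by
      rw [hπ'def, Measure.map_apply hswap hE'm.compl]
      exact hπ1E
    have hπ'fst : π'.map Prod.fst = ν1 := by
      rw [hπ'def, Measure.map_map measurable_fst hswap]
      exact hπ1snd
    have hπ'snd : π'.map Prod.snd = π1.map Prod.fst := by
      rw [hπ'def, Measure.map_map measurable_snd hswap]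
      have hc : (Prod.snd ∘ Prod.swap : Ω0 × Ω1 → Ω0) = Prod.fst := rfl
      rw [hc]
    have hopt' : ∀ t : ℝ, 0 < t → ∀ σ : Measure (Ω1 × Ω0), IsFiniteMeasure σ → σ E'ᶜ = 0 →
        σ.map Prod.fst ≤ ν1 → σ.map Prod.snd ≤ (ENNReal.ofReal t) • ν0 →
        σ Set.univ ≤ ∫⁻ x, min ((π'.map Prod.snd).rnDeriv ν0 x) (ENNReal.ofReal t) ∂ν0 := by
      intro t ht σ hσfin hσE hσfst hσsnd
      haveI := hσfin
      set σs : Measure (Ω0 × Ω1) := σ.map Prod.swap with hσsdef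
      haveI : IsFiniteMeasure σs := by
        constructor
        rw [hσsdef, Measure.map_apply measurable_swap MeasurableSet.univ, Set.preimage_univ]
        exact measure_lt_top σ _
      have h1 : σs Eᶜ = 0 := by
        rw [hσsdef, Measure.map_apply measurable_swap hE.measurableSet.compl,
          Set.preimage_compl]
        exact hσE
      have h2 : σs.map Prod.snd ≤ ν1 := by
        rw [hσsdef, Measure.map_map measurable_snd measurable_swap]
        exact hσfst
      have h3 : σs.map Prod.fst ≤ (ENNReal.ofReal t) • ν0 := by
        rw [hσsdef, Measure.map_map measurable_fst measurable_swap]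
        exact hσsnd
      have hmem : σs ∈ Feas1 E ν0 ν1 t := ⟨inferInstance, h1, h2, h3⟩
      have h4 : σs Set.univ ≤ Fit1 E ν0 ν1 t := le_iSup₂_of_le σs hmem le_rfl
      have h5 : σ Set.univ = σs Set.univ := by
        rw [hσsdef, Measure.map_apply measurable_swap MeasurableSet.univ, Set.preimage_univ]
      rw [h5, hπ'snd]
      rwa [← hlom1 t ht] at h4
    have hKae' : ∀ᵐ y ∂(ν0.singularPart (ν0.withDensity ((π'.map Prod.snd).rnDeriv ν0))),
        K y {x : Ω1 | (x, y) ∈ E'} = 1 := by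
      rw [hπ'snd]
      exact hKae
    have hconc := aux_singular E' hE'm ν1 ν0 π' hπ'E hπ'fst hopt' K hKae'
    rwa [hπ'snd] at hconc
end
end

section
/- In the symmetric density decomposition setting, fix ι ∈ {0,1} and t > 0, and define A_t := {x ∈ Ω_ι : ρ_ι^ac(x) ≤ t} and B_t := {y ∈ Ω_ῑ : ρ_ῑ^ac(y) ≥ 1/t}. If σ is a finite measure on Ω_ι × Ω_ῑ that vanishes outside the edge relation (i.e. σ gives zero mass to the set of pairs (x_ι, x_ῑ) whose corresponding ordered pair in Ω0 × Ω1 lies outside E), whose Ω_ι-marginal is at most the restriction of ν_ι to A_t, and whose Ω_ῑ-marginal is at most the restriction of ν_ῑ^ac to the complement of B_t, then σ = 0. -/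
/- STATEMENT 16: No subflow across incompatible layers
(Lemma `reciprocal_densities_layer_compatibility`), in the symmetric density decomposition
setting.  "Fix ι ∈ {0,1}" is rendered as the conjunction of the two cases; for `ι = 1` the
subflow lives on `Ω1 × Ω0` and the edge constraint refers to the transposed pairs. -/

open MeasureTheory ProbabilityTheory Filter
open scoped ENNReal NNReal

noncomputable section

variable {Ω0 Ω1 : Type} [MeasurableSpace Ω0] [MeasurableSpace Ω1]

namespace LayerAux

open Topology

variable {α β : Type} [MeasurableSpace α] [MeasurableSpace β]

lemma map_withDensity_comp (μ : Measure α) {T : α → β} (hT : Measurable T)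
    {f : β → ℝ≥0∞} (hf : Measurable f) :
    (μ.withDensity (f ∘ T)).map T = (μ.map T).withDensity f := by
  ext B hB
  rw [Measure.map_apply hT hB, withDensity_apply _ hB, withDensity_apply _ (hT hB),
    setLIntegral_map hB hf hT]
  rfl

lemma withDensity_le_self (μ : Measure α) {f : α → ℝ≥0∞} (hf : ∀ x, f x ≤ 1) :
    μ.withDensity f ≤ μ := by
  have : μ.withDensity f ≤ μ.withDensity 1 :=
    withDensity_mono (Eventually.of_forall hf)
  simpa [withDensity_one] using this

lemma smul_mono {μ ν : Measure α} (c : ℝ≥0∞) (h : μ ≤ ν) : c • μ ≤ c • ν := by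
  intro s
  simp only [Measure.smul_apply, smul_eq_mul]
  exact mul_le_mul_right (h s) c

lemma exists_nat_add_ofReal_le {a : ℝ≥0∞} (ha : a < 1) :
    ∃ k : ℕ, a + ENNReal.ofReal (1 / (k + 1)) ≤ 1 := by
  have hane : a ≠ ∞ := ha.ne_top
  have har : a.toReal < 1 := by
    rw [← ENNReal.ofReal_one] at ha
    exact (ENNReal.lt_ofReal_iff_toReal_lt hane).mp ha
  obtain ⟨k, hk⟩ := exists_nat_one_div_lt (show (0:ℝ) < 1 - a.toReal by linarith)
  refine ⟨k, ?_⟩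
  calc a + ENNReal.ofReal (1 / (k + 1))
      = ENNReal.ofReal (a.toReal + 1 / (k + 1)) := by
        rw [ENNReal.ofReal_add ENNReal.toReal_nonneg (by positivity), ENNReal.ofReal_toReal hane]
    _ ≤ ENNReal.ofReal 1 := ENNReal.ofReal_le_ofReal (by linarith)
    _ = 1 := ENNReal.ofReal_one

lemma exists_nat_le_ofReal_mul {r : ℝ} (hr : 0 < r) {a : ℝ≥0∞}
    (ha : a < ENNReal.ofReal r) :
    ∃ k : ℕ, a ≤ ENNReal.ofReal (r * (1 - 1 / (k + 1))) := by
  have hane : a ≠ ∞ := ha.ne_top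
  have har : a.toReal < r := (ENNReal.lt_ofReal_iff_toReal_lt hane).mp ha
  rcases le_or_gt a 0 with h0 | h0
  · exact ⟨0, le_trans h0 (zero_le)⟩
  obtain ⟨k, hk⟩ := exists_nat_one_div_lt (show (0:ℝ) < 1 - a.toReal / r by
    rw [sub_pos, div_lt_one hr]; exact har)
  refine ⟨k, ?_⟩
  rw [← ENNReal.ofReal_toReal hane]
  apply ENNReal.ofReal_le_ofReal
  have hk' : a.toReal / r ≤ 1 - 1 / (k + 1) := by linarith
  calc a.toReal = r * (a.toReal / r) := by field_simp
    _ ≤ r * (1 - 1 / (k + 1)) := mul_le_mul_of_nonneg_left hk' hr.le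

variable {U V : Type} [MeasurableSpace U] [MeasurableSpace V]

/-- One augmentation round: the core "complementary slackness" extraction. -/
lemma oneSide (E' : Set (U × V)) (hE' : MeasurableSet E')
    (νU : Measure U) (νV : Measure V) [IsFiniteMeasure νU] [IsFiniteMeasure νV]
    (π : Measure (U × V)) [IsFiniteMeasure π]
    (hπE : π E'ᶜ = 0) (hπfst : π.map Prod.fst = νU)
    {ρ : V → ℝ≥0∞} (hρ : ρ = (π.map Prod.snd).rnDeriv νV)
    {s α d₁ d₂ : ℝ} (hs : 0 < s) (hα : 0 ≤ α) (hαs : α < s) (hd₁ : 0 < d₁) (hd₂ : 0 < d₂)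
    (hopt : ∀ χ : Measure (U × V), IsFiniteMeasure χ → χ E'ᶜ = 0 →
      χ.map Prod.fst ≤ νU → χ.map Prod.snd ≤ ENNReal.ofReal s • νV →
      χ Set.univ ≤ ∫⁻ v, min (ρ v) (ENNReal.ofReal s) ∂νV)
    (ξ : Measure (U × V)) [IsFiniteMeasure ξ] (hξE : ξ E'ᶜ = 0)
    (hξfst : ξ.map Prod.fst ≤ ENNReal.ofReal d₁ • νU)
    (hξsnd : ξ.map Prod.snd ≤ ENNReal.ofReal d₂ • νV.restrict {v | ρ v ≤ ENNReal.ofReal α}) :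
    ∃ G : Set U, MeasurableSet G ∧ ξ.map Prod.fst Gᶜ = 0 ∧
      (π.restrict (G ×ˢ Set.univ)).map Prod.fst = νU.restrict G ∧
      (π.restrict (G ×ˢ Set.univ)).map Prod.snd ≤
        ENNReal.ofReal s • νV.restrict {v | ρ v ≤ ENNReal.ofReal s} := by
  have hρmeas : Measurable ρ := hρ ▸ Measure.measurable_rnDeriv _ _
  set c : ℝ≥0∞ := ENNReal.ofReal s with hc
  have hc0 : c ≠ 0 := (ENNReal.ofReal_pos.mpr hs).ne'
  have hct : c ≠ ∞ := ENNReal.ofReal_ne_top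
  set P : Measure V := π.map Prod.snd with hP
  have hPdec : P = P.singularPart νV + νV.withDensity ρ := by
    rw [hρ]; exact (P.haveLebesgueDecomposition_add νV)
  obtain ⟨S, hSmeas, hPsingS, hνVSc⟩ := Measure.mutuallySingular_singularPart P νV
  -- thinning weight
  set g : V → ℝ≥0∞ := S.indicator (fun v => min (ρ v) c / ρ v) with hg
  have hgmeas : Measurable g := ((hρmeas.min measurable_const).div hρmeas).indicator hSmeas
  have hg_le_one : ∀ v, g v ≤ 1 := by
    intro v
    rw [hg]
    by_cases hv : v ∈ S
    · rw [Set.indicator_of_mem hv]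
      exact le_trans (ENNReal.div_le_div_right (min_le_left _ _) _) ENNReal.div_self_le_one
    · rw [Set.indicator_of_notMem hv]; exact zero_le_one
  set κ : Measure (U × V) := π.withDensity (g ∘ Prod.snd) with hκ
  have hκle : κ ≤ π := withDensity_le_self π (fun p => hg_le_one p.2)
  haveI : IsFiniteMeasure κ := isFiniteMeasure_of_le π hκle
  have hκE : κ E'ᶜ = 0 := le_antisymm (le_trans (hκle E'ᶜ) hπE.le) (zero_le)
  -- second marginal of κ
  have hκsnd : κ.map Prod.snd = νV.withDensity (fun v => min (ρ v) c) := by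
    rw [hκ, map_withDensity_comp π measurable_snd hgmeas, ← hP]
    rw [hPdec, withDensity_add_measure]
    have h1 : (P.singularPart νV).withDensity g = 0 := by
      rw [hg, withDensity_indicator hSmeas, Measure.restrict_eq_zero.mpr hPsingS]
      ext B hB
      rw [withDensity_apply _ hB]
      simp
    have h2 : (νV.withDensity ρ).withDensity g = νV.withDensity (fun v => min (ρ v) c) := by
      rw [← withDensity_mul νV hρmeas hgmeas]
      apply withDensity_congr_ae
      have hSae : ∀ᵐ v ∂νV, v ∈ S := by
        rw [ae_iff]
        exact hνVSc
      have hρfin : ∀ᵐ v ∂νV, ρ v < ∞ := hρ ▸ Measure.rnDeriv_lt_top _ _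
      filter_upwards [hSae, hρfin] with v hvS hvfin
      simp only [Pi.mul_apply, hg, Set.indicator_of_mem hvS]
      by_cases hv0 : ρ v = 0
      · simp [hv0]
      · exact ENNReal.mul_div_cancel hv0 hvfin.ne
    rw [h1, h2, zero_add]
  have hκsnd_le : κ.map Prod.snd ≤ c • νV := by
    rw [hκsnd, ← withDensity_const]
    exact withDensity_mono (Eventually.of_forall fun v => min_le_right _ _)
  have hκfst_le : κ.map Prod.fst ≤ νU := hπfst ▸ Measure.map_mono hκle measurable_fst
  -- the optimal value
  set I : ℝ≥0∞ := ∫⁻ v, min (ρ v) c ∂νV with hI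
  have hκuniv : κ Set.univ = I := by
    have h1 : κ.map Prod.snd Set.univ = κ Set.univ := by
      rw [Measure.map_apply measurable_snd MeasurableSet.univ, Set.preimage_univ]
    rw [← h1, hκsnd, withDensity_apply _ MeasurableSet.univ, setLIntegral_univ]
  have hIne : I ≠ ∞ := by
    have : I ≤ c * νV Set.univ := by
      rw [hI]
      calc ∫⁻ v, min (ρ v) c ∂νV ≤ ∫⁻ _, c ∂νV :=
            lintegral_mono fun v => min_le_right _ _
        _ = c * νV Set.univ := lintegral_const c
    exact ne_top_of_le_ne_top (ENNReal.mul_ne_top hct (measure_ne_top _ _)) this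
  -- saturation density on the U side
  set u : U → ℝ≥0∞ := (κ.map Prod.fst).rnDeriv νU with hu
  have humeas : Measurable u := hu ▸ Measure.measurable_rnDeriv _ _
  have hurepr : νU.withDensity u = κ.map Prod.fst :=
    Measure.withDensity_rnDeriv_eq _ _ (Measure.absolutelyContinuous_of_le hκfst_le)
  have hule1 : u ≤ᵐ[νU] 1 := hu ▸ Measure.rnDeriv_le_one_of_le hκfst_le
  set W : ℕ → Set U := fun k => {x | u x + ENNReal.ofReal (1 / (k + 1)) ≤ 1} with hW
  have hWmeas : ∀ k, MeasurableSet (W k) := fun k =>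
    measurableSet_le (humeas.add measurable_const) measurable_const
  -- no augmentation: ξ puts no mass over slack regions
  have hkey : ∀ k : ℕ, ξ.map Prod.fst (W k) = 0 := by
    intro k
    set ε : ℝ := min ((s - α) / (d₂ + 1)) ((1 / (k + 1)) / (d₁ + 1)) with hε
    have hεpos : 0 < ε := by
      apply lt_min
      · apply div_pos (by linarith) (by linarith)
      · positivity
    have hεd₂ : α + ε * d₂ ≤ s := by
      have h1 : ε ≤ (s - α) / (d₂ + 1) := min_le_left _ _
      have h2 : ε * d₂ ≤ (s - α) / (d₂ + 1) * d₂ := mul_le_mul_of_nonneg_right h1 hd₂.le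
      have h3 : (s - α) / (d₂ + 1) * d₂ ≤ s - α := by
        rw [div_mul_eq_mul_div, div_le_iff₀ (by positivity)]
        nlinarith
      linarith
    have hεd₁ : ε * d₁ ≤ 1 / (k + 1) := by
      have h1 : ε ≤ (1 / (k + 1)) / (d₁ + 1) := min_le_right _ _
      have h2 : ε * d₁ ≤ (1 / (k + 1)) / (d₁ + 1) * d₁ := mul_le_mul_of_nonneg_right h1 hd₁.le
      have h3 : (1 / ((k:ℝ) + 1)) / (d₁ + 1) * d₁ ≤ 1 / (k + 1) := by
        rw [div_mul_eq_mul_div, div_le_iff₀ (by positivity)]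
        have h4 : (0:ℝ) < 1 / ((k:ℝ)+1) := by positivity
        nlinarith
      linarith
    set ξ' : Measure (U × V) := ξ.restrict (Prod.fst ⁻¹' W k) with hξ'
    haveI : IsFiniteMeasure ξ' := isFiniteMeasure_of_le ξ Measure.restrict_le_self
    set χ : Measure (U × V) := κ + ENNReal.ofReal ε • ξ' with hχ
    haveI : IsFiniteMeasure (ENNReal.ofReal ε • ξ') := by
      constructor
      rw [Measure.smul_apply, smul_eq_mul]
      exact ENNReal.mul_lt_top ENNReal.ofReal_lt_top (measure_lt_top _ _)
    haveI : IsFiniteMeasure χ := by rw [hχ]; infer_instance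
    have hχE : χ E'ᶜ = 0 := by
      rw [hχ]
      simp only [Measure.coe_add, Pi.add_apply, Measure.smul_apply, smul_eq_mul]
      rw [hκE]
      have : ξ' E'ᶜ = 0 := le_antisymm (le_trans (Measure.restrict_le_self E'ᶜ) hξE.le) (zero_le)
      rw [this, mul_zero, add_zero]
    have hξ'fst : ξ'.map Prod.fst = (ξ.map Prod.fst).restrict (W k) :=
      (Measure.restrict_map measurable_fst (hWmeas k)).symm
    have hχfst : χ.map Prod.fst ≤ νU := by
      rw [hχ, Measure.map_add _ _ measurable_fst, Measure.map_smul]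
      have hb : ENNReal.ofReal ε • ξ'.map Prod.fst ≤
          ENNReal.ofReal (ε * d₁) • νU.restrict (W k) := by
        rw [hξ'fst, ENNReal.ofReal_mul hεpos.le]
        calc ENNReal.ofReal ε • (ξ.map Prod.fst).restrict (W k)
            ≤ ENNReal.ofReal ε • (ENNReal.ofReal d₁ • νU).restrict (W k) :=
              smul_mono _ (Measure.restrict_mono Set.Subset.rfl hξfst)
          _ = ENNReal.ofReal ε • ENNReal.ofReal d₁ • νU.restrict (W k) := by
              rw [Measure.restrict_smul]
          _ = (ENNReal.ofReal ε * ENNReal.ofReal d₁) • νU.restrict (W k) := by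
              rw [smul_smul]
      refine le_trans (add_le_add le_rfl hb) ?_
      rw [← hurepr, ← withDensity_indicator_one (hWmeas k), ← withDensity_smul _ ((measurable_one.indicator (hWmeas k)) : Measurable ((W k).indicator 1)),
        ← withDensity_add_left humeas]
      · calc νU.withDensity (u + ENNReal.ofReal (ε * d₁) • (W k).indicator 1)
            ≤ νU.withDensity 1 := by
              apply withDensity_mono
              filter_upwards [hule1] with x hx
              by_cases hxW : x ∈ W k
              · have := hxW
                simp only [hW, Set.mem_setOf_eq] at this
                simp only [Pi.add_apply, Pi.smul_apply, Set.indicator_of_mem hxW,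
                  Pi.one_apply, smul_eq_mul, mul_one]
                refine le_trans (add_le_add le_rfl (ENNReal.ofReal_le_ofReal hεd₁)) this
              · simp only [Pi.add_apply, Pi.smul_apply, Set.indicator_of_notMem hxW,
                  smul_eq_mul, mul_zero, add_zero, Pi.one_apply]
                exact hx
          _ = νU := withDensity_one
    have hχsnd : χ.map Prod.snd ≤ c • νV := by
      rw [hχ, Measure.map_add _ _ measurable_snd, Measure.map_smul]
      have hb : ENNReal.ofReal ε • ξ'.map Prod.snd ≤
          ENNReal.ofReal (ε * d₂) • νV.restrict {v | ρ v ≤ ENNReal.ofReal α} := by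
        rw [ENNReal.ofReal_mul hεpos.le, ← smul_smul]
        exact smul_mono _ (le_trans
          (Measure.map_mono Measure.restrict_le_self measurable_snd) hξsnd)
      refine le_trans (add_le_add le_rfl hb) ?_
      rw [hκsnd]
      have hLmeas : MeasurableSet {v | ρ v ≤ ENNReal.ofReal α} :=
        measurableSet_le hρmeas measurable_const
      rw [← withDensity_indicator_one hLmeas,
        ← withDensity_smul _ ((measurable_one.indicator hLmeas) :
            Measurable ({v | ρ v ≤ ENNReal.ofReal α}.indicator 1)),
        ← withDensity_add_left (hρmeas.min measurable_const), ← withDensity_const]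
      apply withDensity_mono
      apply Eventually.of_forall
      intro v
      by_cases hvL : v ∈ {v | ρ v ≤ ENNReal.ofReal α}
      · simp only [Pi.add_apply, Pi.smul_apply, Set.indicator_of_mem hvL, Pi.one_apply,
          smul_eq_mul, mul_one]
        have h1 : min (ρ v) c ≤ ENNReal.ofReal α := le_trans (min_le_left _ _) hvL
        calc min (ρ v) c + ENNReal.ofReal (ε * d₂)
            ≤ ENNReal.ofReal α + ENNReal.ofReal (ε * d₂) := add_le_add h1 le_rfl
          _ = ENNReal.ofReal (α + ε * d₂) := (ENNReal.ofReal_add hα (by positivity)).symm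
          _ ≤ c := ENNReal.ofReal_le_ofReal hεd₂
      · simp only [Pi.add_apply, Pi.smul_apply, Set.indicator_of_notMem hvL,
          smul_eq_mul, mul_zero, add_zero]
        exact min_le_right _ _
    have hbound := hopt χ inferInstance hχE hχfst hχsnd
    have hχuniv : χ Set.univ = I + ENNReal.ofReal ε * ξ' Set.univ := by
      rw [hχ]
      simp only [Measure.coe_add, Pi.add_apply, Measure.smul_apply, smul_eq_mul, hκuniv]
    rw [hχuniv] at hbound
    have hx0 : ENNReal.ofReal ε * ξ' Set.univ = 0 := by
      have hle0 : ENNReal.ofReal ε * ξ' Set.univ ≤ 0 :=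
        ENNReal.le_of_add_le_add_left hIne (by rw [add_zero]; exact hbound)
      exact le_antisymm hle0 (zero_le)
    have hξ'0 : ξ' Set.univ = 0 := by
      rcases mul_eq_zero.mp hx0 with h | h
      · exact absurd h (ENNReal.ofReal_pos.mpr hεpos).ne'
      · exact h
    rw [Measure.map_apply measurable_fst (hWmeas k)]
    rw [hξ', Measure.restrict_apply_univ] at hξ'0
    exact hξ'0
  -- the saturated set
  set G : Set U := {x | 1 ≤ u x} with hG
  have hGmeas : MeasurableSet G := measurableSet_le measurable_const humeas
  have hGprodmeas : MeasurableSet (G ×ˢ (Set.univ : Set V)) := hGmeas.prod MeasurableSet.univ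
  have hξGc : ξ.map Prod.fst Gᶜ = 0 := by
    have hsub : Gᶜ ⊆ ⋃ k, W k := by
      intro x hx
      simp only [hG, Set.mem_compl_iff, Set.mem_setOf_eq, not_le] at hx
      obtain ⟨k, hk⟩ := exists_nat_add_ofReal_le hx
      exact Set.mem_iUnion.mpr ⟨k, hk⟩
    exact le_antisymm (le_trans (measure_mono hsub) (measure_iUnion_null hkey).le) (zero_le)
  refine ⟨G, hGmeas, hξGc, ?_, ?_⟩
  · rw [Set.prod_univ, ← Measure.restrict_map measurable_fst hGmeas, hπfst]
  -- second marginal bound for the piece of π over G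
  have hκfstG : κ.map Prod.fst G = νU G := by
    refine le_antisymm (hκfst_le G) ?_
    have h1 : κ.map Prod.fst G = ∫⁻ x in G, u x ∂νU := by
      rw [← hurepr, withDensity_apply _ hGmeas]
    have h2 : νU G = ∫⁻ x in G, 1 ∂νU := (setLIntegral_one G).symm
    rw [h1, h2]
    exact setLIntegral_mono humeas fun x hx => hx
  have hπκG : π (G ×ˢ Set.univ) = κ (G ×ˢ Set.univ) := by
    have hπ1 : π (G ×ˢ Set.univ) = νU G := by
      rw [← hπfst, Measure.map_apply measurable_fst hGmeas, ← Set.prod_univ]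
    have hκ1 : κ (G ×ˢ Set.univ) = νU G := by
      rw [← hκfstG, Measure.map_apply measurable_fst hGmeas, ← Set.prod_univ]
    rw [hπ1, hκ1]
  have hDnull : ∀ k : ℕ,
      π ((G ×ˢ Set.univ) ∩ Prod.snd ⁻¹' {v | g v ≤ 1 - ENNReal.ofReal (1 / (k + 1))}) = 0 := by
    intro k
    set δ : ℝ≥0∞ := ENNReal.ofReal (1 / (k + 1)) with hδ
    have hδ0 : δ ≠ 0 := (ENNReal.ofReal_pos.mpr (by positivity)).ne'
    set T : Set (U × V) := Prod.snd ⁻¹' {v | g v ≤ 1 - δ} with hT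
    have hTmeas : MeasurableSet T :=
      measurable_snd (measurableSet_le hgmeas measurable_const)
    have hsplitκ := measure_inter_add_diff (μ := κ) (G ×ˢ Set.univ) hTmeas
    have hsplitπ := measure_inter_add_diff (μ := π) (G ×ˢ Set.univ) hTmeas
    have hA : κ ((G ×ˢ Set.univ) ∩ T) ≤ (1 - δ) * π ((G ×ˢ Set.univ) ∩ T) := by
      rw [hκ, withDensity_apply _ (hGprodmeas.inter hTmeas)]
      calc ∫⁻ p in (G ×ˢ Set.univ) ∩ T, (g ∘ Prod.snd) p ∂π
          ≤ ∫⁻ _ in (G ×ˢ Set.univ) ∩ T, (1 - δ) ∂π :=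
            setLIntegral_mono measurable_const fun p hp => hp.2
        _ = (1 - δ) * π ((G ×ˢ Set.univ) ∩ T) := setLIntegral_const _ _
    have hB : κ ((G ×ˢ Set.univ) \ T) ≤ π ((G ×ˢ Set.univ) \ T) := hκle _
    have hcomb : π ((G ×ˢ Set.univ) ∩ T) + π ((G ×ˢ Set.univ) \ T) ≤
        (1 - δ) * π ((G ×ˢ Set.univ) ∩ T) + π ((G ×ˢ Set.univ) \ T) := by
      rw [hsplitπ, hπκG, ← hsplitκ]
      exact add_le_add hA hB
    have hfin : π ((G ×ˢ Set.univ) \ T) ≠ ∞ := measure_ne_top _ _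
    have hle : π ((G ×ˢ Set.univ) ∩ T) ≤ (1 - δ) * π ((G ×ˢ Set.univ) ∩ T) :=
      (ENNReal.add_le_add_iff_right hfin).mp hcomb
    by_contra hne
    have hlt : (1 - δ) * π ((G ×ˢ Set.univ) ∩ T) < 1 * π ((G ×ˢ Set.univ) ∩ T) :=
      ENNReal.mul_lt_mul_left hne (measure_ne_top _ _)
        (ENNReal.sub_lt_self ENNReal.one_ne_top one_ne_zero hδ0)
    rw [one_mul] at hlt
    exact lt_irrefl _ (lt_of_le_of_lt hle hlt)
  have hgnull : π ((G ×ˢ Set.univ) ∩ Prod.snd ⁻¹' {v | g v < 1}) = 0 := by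
    have hsub : (G ×ˢ Set.univ) ∩ Prod.snd ⁻¹' {v | g v < 1} ⊆
        ⋃ k : ℕ, (G ×ˢ Set.univ) ∩ Prod.snd ⁻¹' {v | g v ≤ 1 - ENNReal.ofReal (1 / (k + 1))} := by
      rintro p ⟨hpG, hpg⟩
      obtain ⟨k, hk⟩ := exists_nat_add_ofReal_le hpg
      exact Set.mem_iUnion.mpr ⟨k, hpG, ENNReal.le_sub_of_add_le_right ENNReal.ofReal_ne_top hk⟩
    exact le_antisymm (le_trans (measure_mono hsub) (measure_iUnion_null hDnull).le) (zero_le)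
  have hg1meas : MeasurableSet {v | 1 ≤ g v} := measurableSet_le measurable_const hgmeas
  have hg1S : {v | 1 ≤ g v} ⊆ S := by
    intro v hv
    by_contra hvS
    rw [Set.mem_setOf_eq, hg, Set.indicator_of_notMem hvS] at hv
    exact (not_le.mpr zero_lt_one) hv
  have hg1ρ : {v | 1 ≤ g v} ⊆ {v | ρ v ≤ c} := by
    intro v hv
    have hvS := hg1S hv
    rw [Set.mem_setOf_eq, hg, Set.indicator_of_mem hvS] at hv
    rw [Set.mem_setOf_eq]
    by_contra hρc
    push_neg at hρc
    have hρ0 : ρ v ≠ 0 := fun h => by simp [h] at hρc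
    have hmin : min (ρ v) c = c := min_eq_right hρc.le
    rw [hmin] at hv
    have : c / ρ v < 1 := by
      rw [ENNReal.div_lt_iff (Or.inl hρ0) (Or.inr hct), one_mul]
      exact hρc
    exact (not_le.mpr this) hv
  rw [Measure.le_iff]
  intro B hB
  have hBg : MeasurableSet (B ∩ {v | 1 ≤ g v}) := hB.inter hg1meas
  have hlhs : (π.restrict (G ×ˢ Set.univ)).map Prod.snd B =
      π (Prod.snd ⁻¹' B ∩ (G ×ˢ Set.univ)) := by
    rw [Measure.map_apply measurable_snd hB, Measure.restrict_apply (measurable_snd hB)]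
  have hcover : Prod.snd ⁻¹' B ∩ (G ×ˢ Set.univ) ⊆
      ((G ×ˢ Set.univ) ∩ Prod.snd ⁻¹' {v | g v < 1}) ∪ Prod.snd ⁻¹' (B ∩ {v | 1 ≤ g v}) := by
    rintro p ⟨hpB, hpG⟩
    by_cases h : g p.2 < 1
    · exact Or.inl ⟨hpG, h⟩
    · exact Or.inr ⟨hpB, not_lt.mp h⟩
  have hstep : π (Prod.snd ⁻¹' B ∩ (G ×ˢ Set.univ)) ≤ (π.map Prod.snd) (B ∩ {v | 1 ≤ g v}) := by
    calc π (Prod.snd ⁻¹' B ∩ (G ×ˢ Set.univ))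
        ≤ π ((G ×ˢ Set.univ) ∩ Prod.snd ⁻¹' {v | g v < 1}) +
          π (Prod.snd ⁻¹' (B ∩ {v | 1 ≤ g v})) :=
          le_trans (measure_mono hcover) (measure_union_le _ _)
      _ = π (Prod.snd ⁻¹' (B ∩ {v | 1 ≤ g v})) := by rw [hgnull, zero_add]
      _ = (π.map Prod.snd) (B ∩ {v | 1 ≤ g v}) :=
          (Measure.map_apply measurable_snd hBg).symm
  have hPbound : (π.map Prod.snd) (B ∩ {v | 1 ≤ g v}) ≤
      (ENNReal.ofReal s • νV.restrict {v | ρ v ≤ ENNReal.ofReal s}) B := by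
    have hsing : (P.singularPart νV) (B ∩ {v | 1 ≤ g v}) = 0 :=
      measure_mono_null (le_trans (Set.inter_subset_right) hg1S) hPsingS
    have hP2 : (π.map Prod.snd) (B ∩ {v | 1 ≤ g v}) =
        (P.singularPart νV) (B ∩ {v | 1 ≤ g v}) + (νV.withDensity ρ) (B ∩ {v | 1 ≤ g v}) := by
      rw [← hP]
      conv_lhs => rw [hPdec]
      rfl
    rw [hP2, hsing, zero_add, withDensity_apply _ hBg]
    calc ∫⁻ v in B ∩ {v | 1 ≤ g v}, ρ v ∂νV
        ≤ ∫⁻ _ in B ∩ {v | 1 ≤ g v}, c ∂νV :=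
          setLIntegral_mono measurable_const fun v hv => hg1ρ hv.2
      _ = c * νV (B ∩ {v | 1 ≤ g v}) := setLIntegral_const _ _
      _ ≤ c * νV (B ∩ {v | ρ v ≤ c}) := by
          exact mul_le_mul_right (measure_mono (Set.inter_subset_inter_right _ hg1ρ)) c
      _ = (ENNReal.ofReal s • νV.restrict {v | ρ v ≤ ENNReal.ofReal s}) B := by
          rw [Measure.smul_apply, Measure.restrict_apply hB, smul_eq_mul]
  rw [hlhs]
  exact le_trans hstep hPbound

lemma isFiniteMeasure_ofReal_smul {α : Type} [MeasurableSpace α] (r : ℝ) (μ : Measure α)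
    [IsFiniteMeasure μ] : IsFiniteMeasure (ENNReal.ofReal r • μ) := by
  constructor
  rw [Measure.smul_apply, smul_eq_mul]
  exact ENNReal.mul_lt_top ENNReal.ofReal_lt_top (measure_lt_top _ _)

lemma null_of_le_smul_restrict {α : Type} [MeasurableSpace α] {μ ν : Measure α} {L : Set α}
    (hL : MeasurableSet L) {c : ℝ≥0∞} (h : μ ≤ c • ν.restrict L) : μ Lᶜ = 0 := by
  have h1 := h Lᶜ
  rw [Measure.smul_apply, Measure.restrict_apply hL.compl, Set.compl_inter_self,
    measure_empty, smul_eq_mul, mul_zero] at h1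
  exact le_antisymm h1 (zero_le)

lemma map_univ_eq {α β : Type} [MeasurableSpace α] [MeasurableSpace β] (μ : Measure α)
    {f : α → β} (hf : Measurable f) : μ.map f Set.univ = μ Set.univ := by
  rw [Measure.map_apply hf MeasurableSet.univ, Set.preimage_univ]

lemma frac_nat_lt (n : ℕ) : (n : ℝ) / (n + 1) < ((n : ℝ) + 1) / ((n : ℝ) + 1 + 1) := by
  rw [div_lt_div_iff₀ (by positivity) (by positivity)]
  nlinarith [sq_nonneg ((n:ℝ))]

lemma frac_nat_nonneg (n : ℕ) : 0 ≤ (n : ℝ) / (n + 1) := by positivity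

lemma frac_nat_lt_one (n : ℕ) : (n : ℝ) / (n + 1) < 1 := by
  rw [div_lt_one (by positivity)]; linarith

lemma frac_nat_half_le (n : ℕ) :
    ((0:ℝ) + 1) / ((0:ℝ) + 1 + 1) ≤ ((n : ℝ) + 1) / ((n : ℝ) + 1 + 1) := by
  rw [div_le_div_iff₀ (by positivity) (by positivity)]
  nlinarith [Nat.cast_nonneg (α := ℝ) n]

/-- An increasing ladder of real levels. -/
def ladder (c d : ℝ) (n : ℕ) : ℝ := c + d * ((n:ℝ)/((n:ℝ)+1))

lemma ladder_zero (c d : ℝ) : ladder c d 0 = c := by simp [ladder]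

lemma ladder_mono {d : ℝ} (c : ℝ) (hd : 0 < d) (n : ℕ) :
    ladder c d n < ladder c d (n+1) := by
  have h := mul_lt_mul_of_pos_left (frac_nat_lt n) hd
  unfold ladder
  push_cast
  linarith

lemma ladder_nonneg {c d : ℝ} (hc : 0 ≤ c) (hd : 0 ≤ d) (n : ℕ) : 0 ≤ ladder c d n := by
  have h := frac_nat_nonneg n
  unfold ladder
  nlinarith

lemma ladder_pos_succ {c d : ℝ} (hc : 0 ≤ c) (hd : 0 < d) (n : ℕ) :
    0 < ladder c d (n+1) := by
  have h : (0:ℝ) < ((n:ℝ)+1)/((n:ℝ)+1+1) := by positivity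
  unfold ladder
  push_cast
  nlinarith

lemma ladder_ge {c d : ℝ} (hd : 0 ≤ d) (n : ℕ) : c ≤ ladder c d n := by
  have h := frac_nat_nonneg n
  unfold ladder
  nlinarith

lemma ladder_lt {c d : ℝ} (hd : 0 < d) (n : ℕ) : ladder c d n < c + d := by
  have h1 := frac_nat_lt_one n
  have h2 := frac_nat_nonneg n
  unfold ladder
  nlinarith

lemma ladder_one_le_succ {c d : ℝ} (hd : 0 ≤ d) (n : ℕ) :
    ladder c d 1 ≤ ladder c d (n+1) := by
  have h := frac_nat_half_le n
  have h2 : ((1:ℕ):ℝ) = (0:ℝ) + 1 := by norm_num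
  unfold ladder
  push_cast
  nlinarith

/-- The master contradiction lemma: a nonzero "cross layer" subflow is impossible. -/
lemma master {X Y : Type} [MeasurableSpace X] [MeasurableSpace Y]
    (E' : Set (X × Y)) (hE' : MeasurableSet E')
    (νX : Measure X) (νY : Measure Y) [IsFiniteMeasure νX] [IsFiniteMeasure νY]
    (π π' : Measure (X × Y)) [IsFiniteMeasure π] [IsFiniteMeasure π']
    (hπE : π E'ᶜ = 0) (hπ'E : π' E'ᶜ = 0)
    (hπfst : π.map Prod.fst = νX) (hπ'snd : π'.map Prod.snd = νY)
    {ρX : X → ℝ≥0∞} {ρY : Y → ℝ≥0∞}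
    (hρX : ρX = (π'.map Prod.fst).rnDeriv νX) (hρY : ρY = (π.map Prod.snd).rnDeriv νY)
    (H0 : ∀ s : ℝ, 0 < s → ∀ χ : Measure (X × Y), IsFiniteMeasure χ → χ E'ᶜ = 0 →
      χ.map Prod.fst ≤ νX → χ.map Prod.snd ≤ ENNReal.ofReal s • νY →
      χ Set.univ ≤ ∫⁻ y, min (ρY y) (ENNReal.ofReal s) ∂νY)
    (H1 : ∀ b : ℝ, 0 < b → ∀ χ : Measure (X × Y), IsFiniteMeasure χ → χ E'ᶜ = 0 →
      χ.map Prod.snd ≤ νY → χ.map Prod.fst ≤ ENNReal.ofReal b • νX →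
      χ Set.univ ≤ ∫⁻ x, min (ρX x) (ENNReal.ofReal b) ∂νX)
    (t : ℝ) (ht : 0 < t)
    (σ : Measure (X × Y)) [IsFiniteMeasure σ] (hσE : σ E'ᶜ = 0)
    (hσfst : σ.map Prod.fst ≤ νX.restrict {x | ρX x ≤ ENNReal.ofReal t})
    (hσsnd : σ.map Prod.snd ≤ νY.restrict {y | ρY y < ENNReal.ofReal (1/t)}) :
    σ = 0 := by
  by_contra hσ0
  have hρXmeas : Measurable ρX := by rw [hρX]; exact Measure.measurable_rnDeriv _ _
  have hρYmeas : Measurable ρY := by rw [hρY]; exact Measure.measurable_rnDeriv _ _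
  have hLmeas : MeasurableSet {y | ρY y < ENNReal.ofReal (1/t)} :=
    measurableSet_lt hρYmeas measurable_const
  have hσuniv : σ.map Prod.snd Set.univ ≠ 0 := by
    rw [map_univ_eq σ measurable_snd]
    exact fun h => hσ0 (Measure.measure_univ_eq_zero.mp h)
  have hσout : σ.map Prod.snd {y | ρY y < ENNReal.ofReal (1/t)}ᶜ = 0 := by
    refine null_of_le_smul_restrict (ν := νY) hLmeas (c := 1) ?_
    rwa [one_smul]
  -- choose a sublevel with positive mass
  have h1t : 0 < 1/t := by positivity
  have hexk : ∃ k : ℕ, σ.map Prod.snd {y | ρY y ≤ ENNReal.ofReal ((1/t) * (1 - 1/(k+1)))} ≠ 0 := by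
    by_contra hall
    push_neg at hall
    apply hσuniv
    have hcov : (Set.univ : Set Y) ⊆
        (⋃ k : ℕ, {y | ρY y ≤ ENNReal.ofReal ((1/t) * (1 - 1/(k+1)))}) ∪
          {y | ρY y < ENNReal.ofReal (1/t)}ᶜ := by
      intro y _
      by_cases hy : ρY y < ENNReal.ofReal (1/t)
      · obtain ⟨k, hk⟩ := exists_nat_le_ofReal_mul h1t hy
        exact Or.inl (Set.mem_iUnion.mpr ⟨k, hk⟩)
      · exact Or.inr hy
    refine le_antisymm ?_ (zero_le)
    calc σ.map Prod.snd Set.univ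
        ≤ σ.map Prod.snd (⋃ k : ℕ, {y | ρY y ≤ ENNReal.ofReal ((1/t) * (1 - 1/(k+1)))}) +
          σ.map Prod.snd ({y | ρY y < ENNReal.ofReal (1/t)}ᶜ) :=
          le_trans (measure_mono hcov) (measure_union_le _ _)
      _ = 0 := by rw [measure_iUnion_null hall, hσout, add_zero]
  obtain ⟨k₀, hk₀⟩ := hexk
  set s0 : ℝ := (1/t) * (1 - 1/(k₀+1)) with hs0def
  have hs0nonneg : 0 ≤ s0 := by
    apply mul_nonneg h1t.le
    have : 1/((k₀:ℝ)+1) ≤ 1 := by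
      rw [div_le_one (by positivity)]; linarith [Nat.cast_nonneg (α := ℝ) k₀]
    linarith
  have hs0lt : s0 < 1/t := by
    have h2 : 0 < 1/((k₀:ℝ)+1) := by positivity
    nlinarith
  set L0 : Set Y := {y | ρY y ≤ ENNReal.ofReal s0} with hL0
  set m0 : ℝ≥0∞ := σ.map Prod.snd L0 with hm0
  have hm0pos : m0 ≠ 0 := hk₀
  -- parameters
  set s : ℝ := (s0 + 1/t)/2 with hsdef
  have hspos : 0 < s := by rw [hsdef]; linarith
  have hs0s : s0 < s := by rw [hsdef]; linarith
  have hslt : s < 1/t := by rw [hsdef]; linarith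
  set b : ℝ := (t + 1/s)/2 with hbdef
  have htinv : t < 1/s := by
    rw [lt_div_iff₀ hspos]
    calc t * s < t * (1/t) := mul_lt_mul_of_pos_left hslt ht
      _ = 1 := by field_simp
  have htb : t < b := by rw [hbdef]; linarith
  have hbpos : 0 < b := lt_trans ht htb
  have hblt : b < 1/s := by rw [hbdef]; linarith
  set q : ℝ := s * b with hqdef
  have hqpos : 0 < q := mul_pos hspos hbpos
  have hqlt1 : q < 1 := by
    calc q = s * b := hqdef
      _ < s * (1/s) := mul_lt_mul_of_pos_left hblt hspos
      _ = 1 := by field_simp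
  -- ladders
  set A : ℕ → ℝ := ladder s0 (s - s0) with hAdef
  set Bd : ℕ → ℝ := ladder t (b - t) with hBdef
  have hssub : (0:ℝ) < s - s0 := by linarith
  have hbsub : (0:ℝ) < b - t := by linarith
  have hA0 : A 0 = s0 := ladder_zero _ _
  have hB0 : Bd 0 = t := ladder_zero _ _
  have hAmono : ∀ n, A n < A (n+1) := fun n => ladder_mono _ hssub n
  have hBmono : ∀ n, Bd n < Bd (n+1) := fun n => ladder_mono _ hbsub n
  have hAnonneg : ∀ n, 0 ≤ A n := fun n => ladder_nonneg hs0nonneg hssub.le n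
  have hBpos : ∀ n, 0 < Bd n := fun n => lt_of_lt_of_le ht (ladder_ge hbsub.le n)
  have hAlt : ∀ n, A n < s := fun n => by
    have := ladder_lt (c := s0) hssub n
    rw [hAdef]; linarith
  have hBlt : ∀ n, Bd n < b := fun n => by
    have := ladder_lt (c := t) hbsub n
    rw [hBdef]; linarith
  have hApos : ∀ n, 0 < A (n+1) := fun n => ladder_pos_succ hs0nonneg hssub n
  have hA1le : ∀ n, A 1 ≤ A (n+1) := fun n => ladder_one_le_succ hssub.le n
  have hA1pos : 0 < A 1 := hApos 0
  have hprodq : ∀ n, A (n+1) * Bd (n+1) ≤ q := fun n => by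
    rw [hqdef]
    exact mul_le_mul (hAlt _).le (hBlt _).le (hBpos _).le hspos.le
  -- uniform bound
  set C : ℝ≥0∞ := νY Set.univ + ENNReal.ofReal (1/(A 1)) * νX Set.univ with hC
  have hCne : C ≠ ∞ := by
    rw [hC]
    exact ENNReal.add_ne_top.mpr ⟨measure_ne_top _ _,
      (ENNReal.mul_lt_top ENNReal.ofReal_lt_top (measure_lt_top _ _)).ne⟩
  -- swapped setting
  set E'' : Set (Y × X) := Prod.swap ⁻¹' E' with hE''def
  have hE''meas : MeasurableSet E'' := measurable_swap hE'
  have hswapswap : ∀ (W : Set (X × Y)), Prod.swap ⁻¹' (Prod.swap ⁻¹' W : Set (Y × X)) = W := by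
    intro W; ext p; simp
  have hfs1 : (Prod.fst ∘ Prod.swap : X × Y → Y) = Prod.snd := rfl
  have hfs2 : (Prod.snd ∘ Prod.swap : X × Y → X) = Prod.fst := rfl
  have hfs3 : (Prod.fst ∘ Prod.swap : Y × X → X) = Prod.snd := rfl
  have hfs4 : (Prod.snd ∘ Prod.swap : Y × X → Y) = Prod.fst := rfl
  set πA : Measure (Y × X) := π'.map Prod.swap with hπAdef
  haveI : IsFiniteMeasure πA := by rw [hπAdef]; infer_instance
  have hπAE : πA E''ᶜ = 0 := by
    rw [hπAdef, Measure.map_apply measurable_swap hE''meas.compl, hE''def,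
      ← Set.preimage_compl, hswapswap]
    exact hπ'E
  have hπAfst : πA.map Prod.fst = νY := by
    rw [hπAdef, Measure.map_map measurable_fst measurable_swap, hfs1]
    exact hπ'snd
  have hρXA : ρX = (πA.map Prod.snd).rnDeriv νX := by
    rw [hπAdef, Measure.map_map measurable_snd measurable_swap, hfs2]
    exact hρX
  have hoptA : ∀ n : ℕ, ∀ χ : Measure (Y × X), IsFiniteMeasure χ → χ E''ᶜ = 0 →
      χ.map Prod.fst ≤ νY → χ.map Prod.snd ≤ ENNReal.ofReal (Bd (n+1)) • νX →
      χ Set.univ ≤ ∫⁻ x, min (ρX x) (ENNReal.ofReal (Bd (n+1))) ∂νX := by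
    intro n χ hχfin hχE hχfst hχsnd
    haveI := hχfin
    rw [← map_univ_eq χ measurable_swap]
    refine H1 (Bd (n+1)) (hBpos _) (χ.map Prod.swap) inferInstance ?_ ?_ ?_
    · rw [Measure.map_apply measurable_swap hE'.compl, Set.preimage_compl]
      exact hχE
    · rw [Measure.map_map measurable_snd measurable_swap, hfs4]
      exact hχfst
    · rw [Measure.map_map measurable_fst measurable_swap, hfs3]
      exact hχsnd
  have hL0meas : MeasurableSet L0 := measurableSet_le hρYmeas measurable_const
  have hAmeas : ∀ n, MeasurableSet {y | ρY y ≤ ENNReal.ofReal (A n)} := fun n =>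
    measurableSet_le hρYmeas measurable_const
  have hBmeas : ∀ n, MeasurableSet {x | ρX x ≤ ENNReal.ofReal (Bd n)} := fun n =>
    measurableSet_le hρXmeas measurable_const
  -- main induction
  have hInv : ∀ n : ℕ, ∃ ξ : Measure (X × Y), IsFiniteMeasure ξ ∧ ξ E'ᶜ = 0 ∧
      (∃ dd : ℝ, 0 < dd ∧ ξ.map Prod.fst ≤
        ENNReal.ofReal dd • νX.restrict {x | ρX x ≤ ENNReal.ofReal (Bd n)}) ∧
      ξ.map Prod.snd ≤ νY.restrict {y | ρY y ≤ ENNReal.ofReal (A n)} ∧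
      ξ Set.univ ≤ C ∧ m0 ≤ (ENNReal.ofReal q)^n * ξ Set.univ := by
    intro n
    induction n with
    | zero =>
      refine ⟨σ.restrict (Prod.snd ⁻¹' L0), isFiniteMeasure_of_le σ Measure.restrict_le_self,
        ?_, ⟨1, one_pos, ?_⟩, ?_, ?_, ?_⟩
      · exact le_antisymm (le_trans (Measure.restrict_le_self E'ᶜ) hσE.le) (zero_le)
      · rw [ENNReal.ofReal_one, one_smul, hB0]
        exact le_trans (Measure.map_mono Measure.restrict_le_self measurable_fst) hσfst
      · rw [← Measure.restrict_map measurable_snd hL0meas]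
        have h1 : (σ.map Prod.snd).restrict L0 ≤
            (νY.restrict {y | ρY y < ENNReal.ofReal (1/t)}).restrict L0 :=
          Measure.restrict_mono Set.Subset.rfl hσsnd
        have h2 : (νY.restrict {y | ρY y < ENNReal.ofReal (1/t)}).restrict L0 ≤
            νY.restrict {y | ρY y ≤ ENNReal.ofReal (A 0)} := by
          rw [Measure.restrict_restrict hL0meas, hA0]
          exact Measure.restrict_mono Set.inter_subset_left le_rfl
        exact le_trans h1 h2
      · have h1 : (σ.restrict (Prod.snd ⁻¹' L0)) Set.univ = σ.map Prod.snd L0 := by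
          rw [Measure.restrict_apply_univ, Measure.map_apply measurable_snd hL0meas]
        rw [h1]
        have h2 : σ.map Prod.snd L0 ≤ νY L0 := by
          refine le_trans (hσsnd L0) ?_
          rw [Measure.restrict_apply hL0meas]
          exact measure_mono Set.inter_subset_left
        exact le_trans (le_trans h2 (measure_mono (Set.subset_univ _))) le_self_add
      · have h1 : (σ.restrict (Prod.snd ⁻¹' L0)) Set.univ = σ.map Prod.snd L0 := by
          rw [Measure.restrict_apply_univ, Measure.map_apply measurable_snd hL0meas]
        rw [h1, pow_zero, one_mul, hm0]
    | succ n ih =>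
      obtain ⟨ξ, hξfin, hξE, ⟨dd, hdd, hξfst⟩, hξsnd, hξC, hξmass⟩ := ih
      haveI := hξfin
      -- Step A (on the swapped side, with plan π')
      set ξA : Measure (Y × X) := ξ.map Prod.swap with hξAdef
      haveI : IsFiniteMeasure ξA := by rw [hξAdef]; infer_instance
      have hξAE : ξA E''ᶜ = 0 := by
        rw [hξAdef, Measure.map_apply measurable_swap hE''meas.compl, hE''def,
          ← Set.preimage_compl, hswapswap]
        exact hξE
      have hξAfsteq : ξA.map Prod.fst = ξ.map Prod.snd := by
        rw [hξAdef, Measure.map_map measurable_fst measurable_swap, hfs1]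
      have hξAsndeq : ξA.map Prod.snd = ξ.map Prod.fst := by
        rw [hξAdef, Measure.map_map measurable_snd measurable_swap, hfs2]
      obtain ⟨GA, hGAmeas, hGAc, hpAfst, hpAsnd⟩ :=
        oneSide E'' hE''meas νY νX πA hπAE hπAfst hρXA
          (hBpos (n+1)) (hBpos n).le (hBmono n) one_pos hdd (hoptA n) ξA hξAE
          (by rw [hξAfsteq, ENNReal.ofReal_one, one_smul]
              exact le_trans hξsnd Measure.restrict_le_self)
          (by rw [hξAsndeq]; exact hξfst)
      set G' : Set Y := GA ∩ {y | ρY y ≤ ENNReal.ofReal (A n)} with hG'def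
      have hG'meas : MeasurableSet G' := hGAmeas.inter (hAmeas n)
      set pieceA : Measure (Y × X) := πA.restrict (G' ×ˢ Set.univ) with hpieceAdef
      haveI : IsFiniteMeasure pieceA := isFiniteMeasure_of_le πA Measure.restrict_le_self
      have hpfst' : pieceA.map Prod.fst = νY.restrict G' := by
        rw [hpieceAdef, Set.prod_univ, ← Measure.restrict_map measurable_fst hG'meas, hπAfst]
      have hpsnd' : pieceA.map Prod.snd ≤
          ENNReal.ofReal (Bd (n+1)) • νX.restrict {x | ρX x ≤ ENNReal.ofReal (Bd (n+1))} := by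
        refine le_trans (Measure.map_mono ?_ measurable_snd) hpAsnd
        exact Measure.restrict_mono (Set.prod_mono Set.inter_subset_left Set.Subset.rfl) le_rfl
      have hB1ne : Bd (n+1) ≠ 0 := (hBpos (n+1)).ne'
      have hBcollapse : ENNReal.ofReal (1/Bd (n+1)) * ENNReal.ofReal (Bd (n+1)) = 1 := by
        rw [← ENNReal.ofReal_mul (one_div_nonneg.mpr (hBpos (n+1)).le),
          one_div_mul_cancel hB1ne, ENNReal.ofReal_one]
      have hBcollapse' : ENNReal.ofReal (Bd (n+1)) * ENNReal.ofReal (1/Bd (n+1)) = 1 := by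
        rw [mul_comm]; exact hBcollapse
      set ζ : Measure (X × Y) := ENNReal.ofReal (1/Bd (n+1)) • pieceA.map Prod.swap with hζdef
      haveI : IsFiniteMeasure (pieceA.map Prod.swap) := inferInstance
      haveI : IsFiniteMeasure ζ := by
        rw [hζdef]; exact isFiniteMeasure_ofReal_smul _ _
      have hζE : ζ E'ᶜ = 0 := by
        rw [hζdef]
        simp only [Measure.smul_apply, smul_eq_mul]
        rw [Measure.map_apply measurable_swap hE'.compl]
        have h1 : pieceA (Prod.swap ⁻¹' E'ᶜ) ≤ πA (Prod.swap ⁻¹' E'ᶜ) :=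
          Measure.restrict_le_self _
        have h2 : πA (Prod.swap ⁻¹' E'ᶜ) = 0 := by
          rw [Set.preimage_compl]
          exact hπAE
        rw [le_antisymm (le_trans h1 h2.le) (zero_le), mul_zero]
      have hζfst : ζ.map Prod.fst ≤ νX.restrict {x | ρX x ≤ ENNReal.ofReal (Bd (n+1))} := by
        rw [hζdef, Measure.map_smul, Measure.map_map measurable_fst measurable_swap, hfs3]
        calc ENNReal.ofReal (1/Bd (n+1)) • pieceA.map Prod.snd
            ≤ ENNReal.ofReal (1/Bd (n+1)) • (ENNReal.ofReal (Bd (n+1)) •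
              νX.restrict {x | ρX x ≤ ENNReal.ofReal (Bd (n+1))}) := smul_mono _ hpsnd'
          _ = νX.restrict {x | ρX x ≤ ENNReal.ofReal (Bd (n+1))} := by
              rw [smul_smul, hBcollapse, one_smul]
      have hζsnd : ζ.map Prod.snd ≤
          ENNReal.ofReal (1/Bd (n+1)) • νY.restrict {y | ρY y ≤ ENNReal.ofReal (A n)} := by
        rw [hζdef, Measure.map_smul, Measure.map_map measurable_snd measurable_swap, hfs4,
          hpfst']
        exact smul_mono _ (Measure.restrict_mono Set.inter_subset_right le_rfl)
      -- mass accounting for step A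
      have hpieceAuniv : pieceA Set.univ = νY G' := by
        rw [← map_univ_eq pieceA measurable_fst, hpfst', Measure.restrict_apply_univ]
      have hζuniv : ζ Set.univ = ENNReal.ofReal (1/Bd (n+1)) * νY G' := by
        rw [hζdef, Measure.smul_apply, smul_eq_mul, map_univ_eq pieceA measurable_swap,
          hpieceAuniv]
      have hmassA : ξ Set.univ ≤ ENNReal.ofReal (Bd (n+1)) * ζ Set.univ := by
        have hout1 : ξ.map Prod.snd ({y | ρY y ≤ ENNReal.ofReal (A n)}ᶜ) = 0 := by
          refine null_of_le_smul_restrict (ν := νY) (hAmeas n) (c := 1) ?_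
          rwa [one_smul]
        have hout2 : ξ.map Prod.snd GAᶜ = 0 := by rw [← hξAfsteq]; exact hGAc
        have hcov : (Set.univ : Set Y) ⊆
            G' ∪ (GAᶜ ∪ {y | ρY y ≤ ENNReal.ofReal (A n)}ᶜ) := by
          intro y _
          by_cases h1 : y ∈ GA
          · by_cases h2 : y ∈ {y | ρY y ≤ ENNReal.ofReal (A n)}
            · exact Or.inl ⟨h1, h2⟩
            · exact Or.inr (Or.inr h2)
          · exact Or.inr (Or.inl h1)
        have h3 : ξ Set.univ ≤ ξ.map Prod.snd G' := by
          rw [← map_univ_eq ξ measurable_snd]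
          calc ξ.map Prod.snd Set.univ
              ≤ ξ.map Prod.snd G' +
                (ξ.map Prod.snd GAᶜ + ξ.map Prod.snd ({y | ρY y ≤ ENNReal.ofReal (A n)}ᶜ)) := by
                refine le_trans (measure_mono hcov) ?_
                refine le_trans (measure_union_le _ _) ?_
                exact add_le_add le_rfl (measure_union_le _ _)
            _ = ξ.map Prod.snd G' := by rw [hout2, hout1, add_zero, add_zero]
        have h4 : ξ.map Prod.snd G' ≤ νY G' := by
          refine le_trans (hξsnd G') ?_
          rw [Measure.restrict_apply hG'meas]
          exact measure_mono Set.inter_subset_left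
        calc ξ Set.univ ≤ νY G' := le_trans h3 h4
          _ = ENNReal.ofReal (Bd (n+1)) * ζ Set.univ := by
              rw [hζuniv, ← mul_assoc, hBcollapse', one_mul]
      -- Step B (back on the original side, with plan π)
      obtain ⟨GB, hGBmeas, hGBc, hpBfst, hpBsnd⟩ :=
        oneSide E' hE' νX νY π hπE hπfst hρY
          (hApos n) (hAnonneg n) (hAmono n) one_pos (one_div_pos.mpr (hBpos (n+1)))
          (fun χ hχfin hχE hχfst hχsnd => H0 (A (n+1)) (hApos n) χ hχfin hχE hχfst hχsnd)
          ζ hζE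
          (by rw [ENNReal.ofReal_one, one_smul]
              exact le_trans hζfst Measure.restrict_le_self)
          hζsnd
      set G₂ : Set X := GB ∩ {x | ρX x ≤ ENNReal.ofReal (Bd (n+1))} with hG₂def
      have hG₂meas : MeasurableSet G₂ := hGBmeas.inter (hBmeas (n+1))
      have hA1ne : A (n+1) ≠ 0 := (hApos n).ne'
      have hAcollapse : ENNReal.ofReal (1/A (n+1)) * ENNReal.ofReal (A (n+1)) = 1 := by
        rw [← ENNReal.ofReal_mul (one_div_nonneg.mpr (hApos n).le),
          one_div_mul_cancel hA1ne, ENNReal.ofReal_one]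
      have hAcollapse' : ENNReal.ofReal (A (n+1)) * ENNReal.ofReal (1/A (n+1)) = 1 := by
        rw [mul_comm]; exact hAcollapse
      set ξnew : Measure (X × Y) :=
        ENNReal.ofReal (1/A (n+1)) • π.restrict (G₂ ×ˢ Set.univ) with hξnewdef
      haveI : IsFiniteMeasure (π.restrict (G₂ ×ˢ Set.univ)) :=
        isFiniteMeasure_of_le π Measure.restrict_le_self
      haveI : IsFiniteMeasure ξnew := by rw [hξnewdef]; exact isFiniteMeasure_ofReal_smul _ _
      have hpfstB : (π.restrict (G₂ ×ˢ Set.univ)).map Prod.fst = νX.restrict G₂ := by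
        rw [Set.prod_univ, ← Measure.restrict_map measurable_fst hG₂meas, hπfst]
      have hEnew : ξnew E'ᶜ = 0 := by
        rw [hξnewdef]
        simp only [Measure.smul_apply, smul_eq_mul]
        rw [le_antisymm (le_trans (Measure.restrict_le_self E'ᶜ) hπE.le) (zero_le), mul_zero]
      have hfstnew : ξnew.map Prod.fst ≤
          ENNReal.ofReal (1/A (n+1)) • νX.restrict {x | ρX x ≤ ENNReal.ofReal (Bd (n+1))} := by
        rw [hξnewdef, Measure.map_smul, hpfstB]
        exact smul_mono _ (Measure.restrict_mono Set.inter_subset_right le_rfl)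
      have hsndnew : ξnew.map Prod.snd ≤ νY.restrict {y | ρY y ≤ ENNReal.ofReal (A (n+1))} := by
        rw [hξnewdef, Measure.map_smul]
        calc ENNReal.ofReal (1/A (n+1)) • (π.restrict (G₂ ×ˢ Set.univ)).map Prod.snd
            ≤ ENNReal.ofReal (1/A (n+1)) • (π.restrict (GB ×ˢ Set.univ)).map Prod.snd := by
              refine smul_mono _ (Measure.map_mono ?_ measurable_snd)
              exact Measure.restrict_mono (Set.prod_mono Set.inter_subset_left Set.Subset.rfl)
                le_rfl
          _ ≤ ENNReal.ofReal (1/A (n+1)) • (ENNReal.ofReal (A (n+1)) •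
              νY.restrict {y | ρY y ≤ ENNReal.ofReal (A (n+1))}) := smul_mono _ hpBsnd
          _ = νY.restrict {y | ρY y ≤ ENNReal.ofReal (A (n+1))} := by
              rw [smul_smul, hAcollapse, one_smul]
      have hπuniv : π Set.univ = νX Set.univ := by
        rw [← map_univ_eq π measurable_fst, hπfst]
      have hξnewuniv : ξnew Set.univ =
          ENNReal.ofReal (1/A (n+1)) * π (G₂ ×ˢ Set.univ) := by
        rw [hξnewdef, Measure.smul_apply, smul_eq_mul, Measure.restrict_apply_univ]
      have hCnew : ξnew Set.univ ≤ C := by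
        rw [hξnewuniv]
        calc ENNReal.ofReal (1/A (n+1)) * π (G₂ ×ˢ Set.univ)
            ≤ ENNReal.ofReal (1/A 1) * νX Set.univ := by
              refine mul_le_mul' (ENNReal.ofReal_le_ofReal ?_) ?_
              · exact one_div_le_one_div_of_le hA1pos (hA1le n)
              · rw [← hπuniv]; exact measure_mono (Set.subset_univ _)
          _ ≤ C := le_add_self
      have hνXG₂ : νX G₂ = π (G₂ ×ˢ Set.univ) := by
        rw [← hπfst, Measure.map_apply measurable_fst hG₂meas, ← Set.prod_univ]
      have hmassB : ζ Set.univ ≤ ENNReal.ofReal (A (n+1)) * ξnew Set.univ := by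
        have hout1 : ζ.map Prod.fst ({x | ρX x ≤ ENNReal.ofReal (Bd (n+1))}ᶜ) = 0 := by
          refine null_of_le_smul_restrict (ν := νX) (hBmeas (n+1)) (c := 1) ?_
          rwa [one_smul]
        have hcov : (Set.univ : Set X) ⊆
            G₂ ∪ (GBᶜ ∪ {x | ρX x ≤ ENNReal.ofReal (Bd (n+1))}ᶜ) := by
          intro x _
          by_cases h1 : x ∈ GB
          · by_cases h2 : x ∈ {x | ρX x ≤ ENNReal.ofReal (Bd (n+1))}
            · exact Or.inl ⟨h1, h2⟩
            · exact Or.inr (Or.inr h2)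
          · exact Or.inr (Or.inl h1)
        have h3 : ζ Set.univ ≤ ζ.map Prod.fst G₂ := by
          rw [← map_univ_eq ζ measurable_fst]
          calc ζ.map Prod.fst Set.univ
              ≤ ζ.map Prod.fst G₂ + (ζ.map Prod.fst GBᶜ +
                ζ.map Prod.fst ({x | ρX x ≤ ENNReal.ofReal (Bd (n+1))}ᶜ)) := by
                refine le_trans (measure_mono hcov) ?_
                refine le_trans (measure_union_le _ _) ?_
                exact add_le_add le_rfl (measure_union_le _ _)
            _ = ζ.map Prod.fst G₂ := by rw [hGBc, hout1, add_zero, add_zero]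
        have h4 : ζ.map Prod.fst G₂ ≤ νX G₂ := by
          refine le_trans (hζfst G₂) ?_
          rw [Measure.restrict_apply hG₂meas]
          exact measure_mono Set.inter_subset_left
        calc ζ Set.univ ≤ νX G₂ := le_trans h3 h4
          _ = ENNReal.ofReal (A (n+1)) * ξnew Set.univ := by
              rw [hξnewuniv, ← mul_assoc, hAcollapse', one_mul, hνXG₂]
      refine ⟨ξnew, inferInstance, hEnew, ⟨1/A (n+1), one_div_pos.mpr (hApos n), hfstnew⟩, hsndnew, hCnew, ?_⟩
      calc m0 ≤ (ENNReal.ofReal q)^n * ξ Set.univ := hξmass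
        _ ≤ (ENNReal.ofReal q)^n *
            (ENNReal.ofReal (Bd (n+1)) * (ENNReal.ofReal (A (n+1)) * ξnew Set.univ)) := by
            refine mul_le_mul_right ?_ _
            exact le_trans hmassA (mul_le_mul_right hmassB _)
        _ = (ENNReal.ofReal q)^n *
            ((ENNReal.ofReal (Bd (n+1)) * ENNReal.ofReal (A (n+1))) * ξnew Set.univ) := by
            rw [mul_assoc]
        _ ≤ (ENNReal.ofReal q)^n * (ENNReal.ofReal q * ξnew Set.univ) := by
            refine mul_le_mul_right (mul_le_mul_left ?_ _) _
            rw [← ENNReal.ofReal_mul (hBpos (n+1)).le]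
            refine ENNReal.ofReal_le_ofReal ?_
            rw [mul_comm]
            exact hprodq n
        _ = (ENNReal.ofReal q)^(n+1) * ξnew Set.univ := by
            rw [pow_succ, mul_assoc]
  -- final contradiction via geometric decay
  have hbound : ∀ n : ℕ, m0 ≤ (ENNReal.ofReal q)^n * C := by
    intro n
    obtain ⟨ξ, _, _, _, _, hCb, hm⟩ := hInv n
    exact le_trans hm (mul_le_mul_right hCb _)
  have hq1' : ENNReal.ofReal q < 1 := ENNReal.ofReal_lt_one.mpr hqlt1
  have htend : Tendsto (fun n : ℕ => (ENNReal.ofReal q)^n * C) atTop (𝓝 0) := by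
    have h1 := ENNReal.tendsto_pow_atTop_nhds_zero_of_lt_one hq1'
    have h2 := ENNReal.Tendsto.mul_const h1 (Or.inr hCne)
    rwa [zero_mul] at h2
  have hm0pos' : (0:ℝ≥0∞) < m0 := pos_iff_ne_zero.mpr hm0pos
  obtain ⟨n, hn⟩ := (htend.eventually_lt_const hm0pos').exists
  exact absurd (hbound n) (not_le.mpr hn)

end LayerAux

theorem reciprocal_densities_layer_compatibility
    [TopologicalSpace Ω0] [PolishSpace Ω0] [BorelSpace Ω0]
    [TopologicalSpace Ω1] [PolishSpace Ω1] [BorelSpace Ω1]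
    (E : Set (Ω0 × Ω1)) (hE : IsClosed E)
    (ν0 : Measure Ω0) (ν1 : Measure Ω1) [IsFiniteMeasure ν0] [IsFiniteMeasure ν1]
    (hν0 : 0 < ν0 Set.univ) (hν1 : 0 < ν1 Set.univ)
    (hNbhd0 : ∀ x : Ω0, ∃ y : Ω1, (x, y) ∈ E) (hNbhd1 : ∀ y : Ω1, ∃ x : Ω0, (x, y) ∈ E)
    (π0 π1 : Measure (Ω0 × Ω1)) (hπ0 : π0 ∈ Plans0 E ν0) (hπ1 : π1 ∈ Plans1 E ν1)
    (hlom0 : LevelOpt0 E ν0 ν1 π0) (hlom1 : LevelOpt1 E ν0 ν1 π1)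
    -- symmetric density decomposition data
    (P0 : Measure Ω0) (hP0 : P0 = π1.map Prod.fst)
    (P1 : Measure Ω1) (hP1 : P1 = π0.map Prod.snd)
    (ρ0 : Ω0 → ℝ≥0∞) (hρ0 : ρ0 = P0.rnDeriv ν0)
    (ρ1 : Ω1 → ℝ≥0∞) (hρ1 : ρ1 = P1.rnDeriv ν1)
    (ν0ac : Measure Ω0)
    (hν0ac : ν0ac = (ν0.withDensity (P0.rnDeriv ν0)).withDensity
        (ν0.rnDeriv (ν0.withDensity (P0.rnDeriv ν0))))
    (ν1ac : Measure Ω1)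
    (hν1ac : ν1ac = (ν1.withDensity (P1.rnDeriv ν1)).withDensity
        (ν1.rnDeriv (ν1.withDensity (P1.rnDeriv ν1))))
    (t : ℝ) (ht : 0 < t) :
    -- case ι = 0
    (∀ σ : Measure (Ω0 × Ω1), IsFiniteMeasure σ →
      σ Eᶜ = 0 →
      σ.map Prod.fst ≤ ν0.restrict {x : Ω0 | ρ0 x ≤ ENNReal.ofReal t} →
      σ.map Prod.snd ≤ ν1ac.restrict {y : Ω1 | ENNReal.ofReal (1 / t) ≤ ρ1 y}ᶜ →
      σ = 0) ∧
    -- case ι = 1 (the subflow lives on Ω1 × Ω0)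
    (∀ σ : Measure (Ω1 × Ω0), IsFiniteMeasure σ →
      σ {p : Ω1 × Ω0 | (p.2, p.1) ∈ E}ᶜ = 0 →
      σ.map Prod.fst ≤ ν1.restrict {y : Ω1 | ρ1 y ≤ ENNReal.ofReal t} →
      σ.map Prod.snd ≤ ν0ac.restrict {x : Ω0 | ENNReal.ofReal (1 / t) ≤ ρ0 x}ᶜ →
      σ = 0) := by
  haveI hπ0fin := hπ0.1
  haveI hπ1fin := hπ1.1
  have hπ0E := hπ0.2.1
  have hπ1E := hπ1.2.1
  have hπ0fst := hπ0.2.2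
  have hπ1snd := hπ1.2.2
  have hEmeas : MeasurableSet E := hE.measurableSet
  have hρ0' : ρ0 = (π1.map Prod.fst).rnDeriv ν0 := by rw [hρ0, hP0]
  have hρ1' : ρ1 = (π0.map Prod.snd).rnDeriv ν1 := by rw [hρ1, hP1]
  have hν1ac_le : ν1ac ≤ ν1 := by rw [hν1ac]; exact Measure.withDensity_rnDeriv_le _ _
  have hν0ac_le : ν0ac ≤ ν0 := by rw [hν0ac]; exact Measure.withDensity_rnDeriv_le _ _
  have hcompl1 : ({y : Ω1 | ENNReal.ofReal (1 / t) ≤ ρ1 y})ᶜ =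
      {y : Ω1 | ρ1 y < ENNReal.ofReal (1 / t)} := by
    ext y; simp [not_le]
  have hcompl0 : ({x : Ω0 | ENNReal.ofReal (1 / t) ≤ ρ0 x})ᶜ =
      {x : Ω0 | ρ0 x < ENNReal.ofReal (1 / t)} := by
    ext x; simp [not_le]
  constructor
  · -- case ι = 0
    intro σ hσfin hσE hσfst hσsnd
    haveI := hσfin
    refine LayerAux.master E hEmeas ν0 ν1 π0 π1 hπ0E hπ1E hπ0fst hπ1snd hρ0' hρ1'
      ?_ ?_ t ht σ hσE hσfst ?_
    · -- H0 from hlom0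
      intro s hs χ hχfin hχE hχfst hχsnd
      have h1 : χ Set.univ ≤ Fit0 E ν0 ν1 s := by
        have hmem : χ ∈ Feas0 E ν0 ν1 s := ⟨hχfin, hχE, hχfst, hχsnd⟩
        exact le_iSup₂ (f := fun (σ' : Measure (Ω0 × Ω1)) (_ : σ' ∈ Feas0 E ν0 ν1 s) =>
          σ' Set.univ) χ hmem
      rw [← hlom0 s hs] at h1
      rw [hρ1']
      exact h1
    · -- H1 from hlom1
      intro b hb χ hχfin hχE hχfst hχsnd
      have h1 : χ Set.univ ≤ Fit1 E ν0 ν1 b := by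
        have hmem : χ ∈ Feas1 E ν0 ν1 b := ⟨hχfin, hχE, hχfst, hχsnd⟩
        exact le_iSup₂ (f := fun (σ' : Measure (Ω0 × Ω1)) (_ : σ' ∈ Feas1 E ν0 ν1 b) =>
          σ' Set.univ) χ hmem
      rw [← hlom1 b hb] at h1
      rw [hρ0']
      exact h1
    · refine le_trans hσsnd ?_
      rw [hcompl1]
      exact Measure.restrict_mono Set.Subset.rfl hν1ac_le
  · -- case ι = 1 (transposed)
    intro σ hσfin hσE hσfst hσsnd
    haveI := hσfin
    set E' : Set (Ω1 × Ω0) := {p : Ω1 × Ω0 | (p.2, p.1) ∈ E} with hE'def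
    have hE'meas : MeasurableSet E' := measurable_swap hEmeas
    have hswapE' : (Prod.swap : Ω0 × Ω1 → Ω1 × Ω0) ⁻¹' E' = E := by
      ext ⟨a, b⟩; rfl
    have hswapE : (Prod.swap : Ω1 × Ω0 → Ω0 × Ω1) ⁻¹' E = E' := by
      ext ⟨a, b⟩; rfl
    have hcomp1 : (Prod.fst ∘ Prod.swap : Ω0 × Ω1 → Ω1) = Prod.snd := rfl
    have hcomp2 : (Prod.snd ∘ Prod.swap : Ω0 × Ω1 → Ω0) = Prod.fst := rfl
    have hcomp3 : (Prod.fst ∘ Prod.swap : Ω1 × Ω0 → Ω0) = Prod.snd := rfl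
    have hcomp4 : (Prod.snd ∘ Prod.swap : Ω1 × Ω0 → Ω1) = Prod.fst := rfl
    set π : Measure (Ω1 × Ω0) := π1.map Prod.swap with hπdef
    set π' : Measure (Ω1 × Ω0) := π0.map Prod.swap with hπ'def
    haveI : IsFiniteMeasure π := by rw [hπdef]; infer_instance
    haveI : IsFiniteMeasure π' := by rw [hπ'def]; infer_instance
    have hπE : π E'ᶜ = 0 := by
      rw [hπdef, Measure.map_apply measurable_swap hE'meas.compl, Set.preimage_compl, hswapE']
      exact hπ1E
    have hπ'E : π' E'ᶜ = 0 := by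
      rw [hπ'def, Measure.map_apply measurable_swap hE'meas.compl, Set.preimage_compl, hswapE']
      exact hπ0E
    have hπfst : π.map Prod.fst = ν1 := by
      rw [hπdef, Measure.map_map measurable_fst measurable_swap, hcomp1]
      exact hπ1snd
    have hπ'snd : π'.map Prod.snd = ν0 := by
      rw [hπ'def, Measure.map_map measurable_snd measurable_swap, hcomp2]
      exact hπ0fst
    have hρ1'' : ρ1 = (π'.map Prod.fst).rnDeriv ν1 := by
      rw [hπ'def, Measure.map_map measurable_fst measurable_swap, hcomp1, hρ1, hP1]
    have hρ0'' : ρ0 = (π.map Prod.snd).rnDeriv ν0 := by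
      rw [hπdef, Measure.map_map measurable_snd measurable_swap, hcomp2, hρ0, hP0]
    refine LayerAux.master E' hE'meas ν1 ν0 π π' hπE hπ'E hπfst hπ'snd hρ1'' hρ0''
      ?_ ?_ t ht σ hσE hσfst ?_
    · -- H0 from hlom1 via swap
      intro s hs χ hχfin hχE hχfst hχsnd
      haveI := hχfin
      have hmem : χ.map Prod.swap ∈ Feas1 E ν0 ν1 s := by
        refine ⟨inferInstance, ?_, ?_, ?_⟩
        · rw [Measure.map_apply measurable_swap hEmeas.compl, Set.preimage_compl, hswapE]
          exact hχE
        · rw [Measure.map_map measurable_snd measurable_swap, hcomp4]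
          exact hχfst
        · rw [Measure.map_map measurable_fst measurable_swap, hcomp3]
          exact hχsnd
      have h1 : (χ.map Prod.swap) Set.univ ≤ Fit1 E ν0 ν1 s :=
        le_iSup₂ (f := fun (σ' : Measure (Ω0 × Ω1)) (_ : σ' ∈ Feas1 E ν0 ν1 s) =>
          σ' Set.univ) (χ.map Prod.swap) hmem
      rw [← hlom1 s hs] at h1
      rw [LayerAux.map_univ_eq χ measurable_swap] at h1
      rw [hρ0']
      exact h1
    · -- H1 from hlom0 via swap
      intro b hb χ hχfin hχE hχfst hχsnd
      haveI := hχfin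
      have hmem : χ.map Prod.swap ∈ Feas0 E ν0 ν1 b := by
        refine ⟨inferInstance, ?_, ?_, ?_⟩
        · rw [Measure.map_apply measurable_swap hEmeas.compl, Set.preimage_compl, hswapE]
          exact hχE
        · rw [Measure.map_map measurable_fst measurable_swap, hcomp3]
          exact hχfst
        · rw [Measure.map_map measurable_snd measurable_swap, hcomp4]
          exact hχsnd
      have h1 : (χ.map Prod.swap) Set.univ ≤ Fit0 E ν0 ν1 b :=
        le_iSup₂ (f := fun (σ' : Measure (Ω0 × Ω1)) (_ : σ' ∈ Feas0 E ν0 ν1 b) =>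
          σ' Set.univ) (χ.map Prod.swap) hmem
      rw [← hlom0 b hb] at h1
      rw [LayerAux.map_univ_eq χ measurable_swap] at h1
      rw [hρ1']
      exact h1
    · refine le_trans hσsnd ?_
      rw [hcompl0]
      exact Measure.restrict_mono Set.Subset.rfl hν0ac_le
end
end

section
/- Let λ be Lebesgue measure on [0,1], let E := {(x,y) ∈ [0,1]² : y > x}, and let Ē := {(x,y) ∈ [0,1]² : y ≥ x}. For a measurable S ⊆ [0,1]², let Π^S be the set of finite Borel measures π on [0,1]² whose first marginal is λ and which satisfy π(Sᶜ) = 0, and define J(π) := ∫_0^1 ((dπ_1/dλ)(y))² dy when the second marginal π_1 of π is absolutely continuous with respect to λ, and J(π) := +∞ otherwise. Then: (1) inf{J(π) : π ∈ Π^E} = 1, and this infimum is not attained; (2) for each ε ∈ (0, 1/2) there exists π_ε ∈ Π^E with J(π_ε) = 1 + (7/6)ε, and π_ε converges weakly as ε → 0 to the diagonal plan π^Δ := (id, id)_#λ; (3) π^Δ ∈ Π^{Ē}, J(π^Δ) = 1, and min{J(π) : π ∈ Π^{Ē}} = 1. -/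
/- STATEMENT 19: Failure of attainment on the open relation `{y > x}` in `[0,1]²`, and
attainment on its closure (Proposition `closed-support-needed`). -/

open MeasureTheory Filter
open scoped ENNReal NNReal

noncomputable section

/-- The unit interval as a subtype. -/
abbrev UnitSq := (Set.Icc (0 : ℝ) 1)

/-- Lebesgue measure on `[0,1]`, as a measure on the subtype. -/
def lam : Measure (Set.Icc (0 : ℝ) 1) := (volume : Measure ℝ).comap Subtype.val

/-- The open relation `{(x,y) : y > x}`. -/
def Eopen : Set (UnitSq × UnitSq) := {p | (p.1 : ℝ) < (p.2 : ℝ)}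

/-- The closed relation `{(x,y) : y ≥ x}`. -/
def Eclosed : Set (UnitSq × UnitSq) := {p | (p.1 : ℝ) ≤ (p.2 : ℝ)}

/-- `Π^S`: finite plans with first marginal `λ`, concentrated on `S`. -/
def PlanS (S : Set (UnitSq × UnitSq)) : Set (Measure (UnitSq × UnitSq)) :=
  {π | IsFiniteMeasure π ∧ π.map Prod.fst = lam ∧ π Sᶜ = 0}

open Classical in
/-- The objective `J(π) = ∫ (dπ₁/dλ)² dλ` if `π₁ ≪ λ`, and `+∞` otherwise. -/
def J (π : Measure (UnitSq × UnitSq)) : ℝ≥0∞ :=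
  if (π.map Prod.snd) ≪ lam then
    ∫⁻ y, ((π.map Prod.snd).rnDeriv lam y) ^ 2 ∂lam
  else ⊤

/-- The diagonal plan `π^Δ = (id, id)_# λ`. -/
def diagPlan : Measure (UnitSq × UnitSq) := lam.map (fun x => (x, x))

lemma measEmb : MeasurableEmbedding (Subtype.val : UnitSq → ℝ) :=
  MeasurableEmbedding.subtype_coe measurableSet_Icc

lemma map_val_lam : lam.map Subtype.val = volume.restrict (Set.Icc (0:ℝ) 1) := by
  rw [lam, measEmb.map_comap, Subtype.range_coe]

lemma lam_apply (s : Set UnitSq) : lam s = volume (Subtype.val '' s) :=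
  measEmb.comap_apply _ _

instance : IsProbabilityMeasure lam := by
  constructor
  rw [lam_apply, Set.image_univ, Subtype.range_coe, Real.volume_Icc]
  norm_num

lemma two_mul_le_sq_add_one (a : ℝ≥0∞) : 2 * a ≤ a ^ 2 + 1 := by
  rcases eq_or_ne a ∞ with rfl | h
  · simp
  · lift a to ℝ≥0 using h
    rw [← ENNReal.coe_ofNat, ← ENNReal.coe_one, ← ENNReal.coe_mul, ← ENNReal.coe_pow,
      ← ENNReal.coe_add, ENNReal.coe_le_coe, ← NNReal.coe_le_coe]
    push_cast
    nlinarith [sq_nonneg ((a : ℝ) - 1)]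

lemma eq_one_of_sq (a : ℝ≥0∞) (h : a ≠ ∞) (hsq : a ^ 2 + 1 = 2 * a) : a = 1 := by
  lift a to ℝ≥0 using h
  rw [← ENNReal.coe_ofNat, ← ENNReal.coe_one, ← ENNReal.coe_mul, ← ENNReal.coe_pow,
    ← ENNReal.coe_add, ENNReal.coe_inj] at hsq
  rw [← ENNReal.coe_one, ENNReal.coe_inj, ← NNReal.coe_inj]
  have := congrArg (NNReal.toReal) hsq
  push_cast at this ⊢
  nlinarith [sq_nonneg ((a : ℝ) - 1)]

lemma pi_univ (π : Measure (UnitSq × UnitSq)) (hfst : π.map Prod.fst = lam) :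
    π Set.univ = 1 := by
  have : (π.map Prod.fst) Set.univ = π Set.univ := by
    rw [Measure.map_apply measurable_fst MeasurableSet.univ]; rfl
  rw [← this, hfst, measure_univ]

lemma snd_univ (π : Measure (UnitSq × UnitSq)) (hfst : π.map Prod.fst = lam) :
    (π.map Prod.snd) Set.univ = 1 := by
  rw [Measure.map_apply measurable_snd MeasurableSet.univ, Set.preimage_univ,
    pi_univ π hfst]

lemma lintegral_rnDeriv_eq_one (π : Measure (UnitSq × UnitSq))
    (hfst : π.map Prod.fst = lam) (hac : (π.map Prod.snd) ≪ lam) :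
    ∫⁻ y, (π.map Prod.snd).rnDeriv lam y ∂lam = 1 := by
  haveI : IsFiniteMeasure (π.map Prod.snd) :=
    ⟨by rw [snd_univ π hfst]; exact ENNReal.one_lt_top⟩
  rw [Measure.lintegral_rnDeriv hac, snd_univ π hfst]

lemma one_le_J (π : Measure (UnitSq × UnitSq)) (hfst : π.map Prod.fst = lam) :
    1 ≤ J π := by
  unfold J
  split_ifs with hac
  · set g := (π.map Prod.snd).rnDeriv lam with hg
    have hmeas : Measurable g := Measure.measurable_rnDeriv _ _
    have h1 : ∫⁻ y, g y ∂lam = 1 := lintegral_rnDeriv_eq_one π hfst hac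
    have h2 : (2 : ℝ≥0∞) = ∫⁻ y, 2 * g y ∂lam := by
      rw [lintegral_const_mul 2 hmeas, h1, mul_one]
    have h3 : ∫⁻ y, 2 * g y ∂lam ≤ ∫⁻ y, (g y ^ 2 + 1) ∂lam :=
      lintegral_mono fun y => two_mul_le_sq_add_one (g y)
    rw [lintegral_add_right _ measurable_const, lintegral_one, measure_univ] at h3
    have : (2 : ℝ≥0∞) ≤ (∫⁻ y, g y ^ 2 ∂lam) + 1 := h2 ▸ h3
    calc (1 : ℝ≥0∞) = 2 - 1 := by rw [show (2:ℝ≥0∞) = 1 + 1 from one_add_one_eq_two.symm, ENNReal.add_sub_cancel_right ENNReal.one_ne_top]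
    _ ≤ (∫⁻ y, g y ^ 2 ∂lam) + 1 - 1 := tsub_le_tsub_right this 1
    _ = ∫⁻ y, g y ^ 2 ∂lam := ENNReal.add_sub_cancel_right ENNReal.one_ne_top
  · exact le_top

lemma snd_eq_lam_of_J_eq_one (π : Measure (UnitSq × UnitSq)) [IsFiniteMeasure π]
    (hfst : π.map Prod.fst = lam) (hJ : J π = 1) : π.map Prod.snd = lam := by
  have hac : (π.map Prod.snd) ≪ lam := by
    by_contra h
    rw [J, if_neg h] at hJ
    exact ENNReal.top_ne_one hJ
  haveI : IsFiniteMeasure (π.map Prod.snd) :=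
    ⟨by rw [snd_univ π hfst]; exact ENNReal.one_lt_top⟩
  rw [J, if_pos hac] at hJ
  set g := (π.map Prod.snd).rnDeriv lam with hg
  have hmeas : Measurable g := Measure.measurable_rnDeriv _ _
  have h1 : ∫⁻ y, g y ∂lam = 1 := lintegral_rnDeriv_eq_one π hfst hac
  have h2 : ∫⁻ y, 2 * g y ∂lam = 2 := by
    rw [lintegral_const_mul 2 hmeas, h1, mul_one]
  have h3 : ∫⁻ y, (g y ^ 2 + 1) ∂lam = 2 := by
    rw [lintegral_add_right _ measurable_const, lintegral_one, measure_univ, hJ,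
      one_add_one_eq_two]
  have hle : ∀ y, 2 * g y ≤ g y ^ 2 + 1 := fun y => two_mul_le_sq_add_one (g y)
  have hsub : ∫⁻ y, (g y ^ 2 + 1) - 2 * g y ∂lam = 0 := by
    rw [lintegral_sub (f := fun y => g y ^ 2 + 1) (g := fun y => 2 * g y) (measurable_const.mul hmeas) (by rw [h2]; exact ENNReal.ofNat_ne_top)
      (Filter.Eventually.of_forall hle), h2, h3, tsub_self]
  have hae0' := (lintegral_eq_zero_iff (((hmeas.pow_const 2).add measurable_const).sub
      (measurable_const.mul hmeas))).mp hsub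
  have hae0 : ∀ᵐ y ∂lam, (g y ^ 2 + 1) - 2 * g y = 0 :=
    hae0'.mono fun y hy => by simpa using hy
  have hlt : ∀ᵐ y ∂lam, g y < ∞ := Measure.rnDeriv_lt_top _ _
  have hone : g =ᵐ[lam] fun _ => (1 : ℝ≥0∞) := by
    filter_upwards [hae0, hlt] with y h0 hy
    exact eq_one_of_sq (g y) hy.ne
      (le_antisymm (tsub_eq_zero_iff_le.mp h0) (hle y))
  haveI : (π.map Prod.snd).HaveLebesgueDecomposition lam :=
    Measure.haveLebesgueDecomposition_of_sigmaFinite _ _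
  have := Measure.withDensity_rnDeriv_eq (π.map Prod.snd) lam hac
  rw [← this, ← hg, withDensity_congr_ae hone]
  simpa using MeasureTheory.withDensity_one (μ := lam)

lemma measurableSet_Eopen : MeasurableSet Eopen :=
  measurableSet_lt (continuous_subtype_val.comp continuous_fst).measurable
    (continuous_subtype_val.comp continuous_snd).measurable

lemma no_plan (π : Measure (UnitSq × UnitSq)) (hfst : π.map Prod.fst = lam)
    (hsnd : π.map Prod.snd = lam) (hE : π Eopenᶜ = 0) : False := by
  set F : UnitSq → ℝ≥0∞ := fun x => ENNReal.ofReal x.val with hF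
  have hFmeas : Measurable F := ENNReal.measurable_ofReal.comp measurable_subtype_coe
  set I := ∫⁻ x, F x ∂lam with hI
  have hIle : I ≤ 1 := by
    calc I ≤ ∫⁻ _, 1 ∂lam := lintegral_mono fun x => ENNReal.ofReal_le_one.mpr x.2.2
    _ = 1 := by rw [lintegral_one, measure_univ]
  have hsndI : ∫⁻ p, F p.2 ∂π = I := by
    rw [hI, ← hsnd, lintegral_map hFmeas measurable_snd]
  have hfstI : ∫⁻ p, F p.1 ∂π = I := by
    rw [hI, ← hfst, lintegral_map hFmeas measurable_fst]
  have hae : ∀ᵐ p ∂π, p ∈ Eopen := by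
    rw [ae_iff]
    exact hE
  set h : UnitSq × UnitSq → ℝ≥0∞ := fun p => ENNReal.ofReal (p.2.val - p.1.val) with hh
  have hhmeas : Measurable h :=
    ENNReal.measurable_ofReal.comp
      ((continuous_subtype_val.comp continuous_snd).sub
        (continuous_subtype_val.comp continuous_fst)).measurable
  have hsplit : ∫⁻ p, F p.2 ∂π = ∫⁻ p, (F p.1 + h p) ∂π := by
    refine lintegral_congr_ae (hae.mono fun p hp => ?_)
    have hp' : p.1.val ≤ p.2.val := le_of_lt hp
    rw [hF, hh]
    dsimp only
    rw [← ENNReal.ofReal_add p.1.2.1 (by linarith), add_sub_cancel]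
  have hzero : ∫⁻ p, h p ∂π = 0 := by
    have : I = I + ∫⁻ p, h p ∂π := by
      have hm1 : Measurable fun p : UnitSq × UnitSq => F p.1 := hFmeas.comp measurable_fst
      rw [lintegral_add_left hm1] at hsplit
      conv_lhs => rw [← hsndI]
      rw [hsplit, hfstI]
    have h' : I + 0 = I + ∫⁻ p, h p ∂π := by rw [add_zero]; exact this
    exact ((ENNReal.add_right_inj (lt_of_le_of_lt hIle ENNReal.one_lt_top).ne).mp h').symm
  have hae2 : ∀ᵐ p ∂π, h p = 0 := (lintegral_eq_zero_iff hhmeas).mp hzero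
  have : ∀ᵐ (_ : UnitSq × UnitSq) ∂π, False := by
    filter_upwards [hae, hae2] with p hp hzp
    rw [hh] at hzp
    simp only [ENNReal.ofReal_eq_zero, sub_nonpos] at hzp
    exact absurd hp (not_lt.mpr hzp)
  have h0 : π Set.univ = 0 := by
    simpa [ae_iff] using this
  rw [pi_univ π hfst] at h0
  exact one_ne_zero h0

lemma map_withDensity_comp {α β : Type*} [MeasurableSpace α] [MeasurableSpace β]
    (μ : Measure α) {f : α → β} (hf : Measurable f) {G : β → ℝ≥0∞} (hG : Measurable G) :
    (μ.withDensity (G ∘ f)).map f = (μ.map f).withDensity G := by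
  ext s hs
  rw [Measure.map_apply hf hs, withDensity_apply _ (hf hs), withDensity_apply _ hs,
    ← lintegral_indicator hs, lintegral_map (hG.indicator hs) hf,
    ← lintegral_indicator (hf hs)]
  congr 1

lemma map_affine {δ : ℝ} (h0 : 0 ≤ δ) (h1 : δ < 1) :
    (volume.restrict (Set.Icc (0:ℝ) 1)).map (fun x => δ + (1-δ)*x)
      = ENNReal.ofReal (1-δ)⁻¹ • volume.restrict (Set.Icc δ 1) := by
  have hδ : (0:ℝ) < 1 - δ := by linarith
  have hA : Measurable fun x : ℝ => δ + (1-δ)*x :=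
    (measurable_id.const_mul (1-δ)).const_add δ
  have hpre : (fun x : ℝ => δ + (1-δ)*x) ⁻¹' (Set.Icc δ 1) = Set.Icc (0:ℝ) 1 := by
    ext x
    simp only [Set.mem_preimage, Set.mem_Icc]
    constructor
    · rintro ⟨ha, hb⟩
      constructor <;> nlinarith
    · rintro ⟨ha, hb⟩
      constructor <;> nlinarith
  have hmapvol : volume.map (fun x : ℝ => δ + (1-δ)*x)
      = ENNReal.ofReal (1-δ)⁻¹ • volume := by
    have hcomp : (fun x : ℝ => δ + (1-δ)*x) = (fun y : ℝ => δ + y) ∘ (fun x => (1-δ)*x) := rfl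
    rw [hcomp, ← Measure.map_map (measurable_const_add δ)
      (show Measurable fun x : ℝ => (1-δ)*x from measurable_id.const_mul (1-δ)),
      Real.map_volume_mul_left hδ.ne', Measure.map_smul,
      MeasureTheory.map_add_left_eq_self volume δ, abs_of_pos (inv_pos.mpr hδ)]
  rw [← hpre, ← Measure.restrict_map hA measurableSet_Icc, hmapvol, Measure.restrict_smul]

def del (ε : ℝ) : ℝ := (7/6*ε) / (1 + 7/6*ε)

lemma del_mem {ε : ℝ} (hε : 0 < ε) : 0 < del ε ∧ del ε < 1 := by
  have h1 : (0:ℝ) < 1 + 7/6*ε := by linarith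
  constructor
  · exact div_pos (by linarith) h1
  · rw [del, div_lt_one h1]; linarith

lemma one_sub_del {ε : ℝ} (hε : 0 < ε) : 1 - del ε = (1 + 7/6*ε)⁻¹ := by
  have h1 : (0:ℝ) < 1 + 7/6*ε := by linarith
  field_simp [del]
  rw [del]; field_simp; ring

def Tmap (ε : ℝ) (x : UnitSq) : UnitSq :=
  Set.projIcc 0 1 zero_le_one (del ε + (1 - del ε) * x.val)

lemma Tmap_continuous (ε : ℝ) : Continuous (Tmap ε) :=
  continuous_projIcc.comp (continuous_const.add (continuous_const.mul continuous_subtype_val))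

lemma Tmap_val {ε : ℝ} (hε : 0 < ε) (x : UnitSq) :
    (Tmap ε x).val = del ε + (1 - del ε) * x.val := by
  obtain ⟨hd0, hd1⟩ := del_mem hε
  have hx0 := x.2.1
  have hx1 := x.2.2
  have hmem : del ε + (1 - del ε) * x.val ∈ Set.Icc (0:ℝ) 1 := by
    constructor
    · nlinarith
    · nlinarith
  rw [Tmap, Set.projIcc_of_mem _ hmem]

def planF (ε : ℝ) : Measure (UnitSq × UnitSq) := lam.map (fun x => (x, Tmap ε x))

lemma pair_meas (ε : ℝ) : Measurable fun x : UnitSq => (x, Tmap ε x) :=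
  measurable_id.prodMk (Tmap_continuous ε).measurable

instance (ε : ℝ) : IsProbabilityMeasure (planF ε) :=
  Measure.isProbabilityMeasure_map (pair_meas ε).aemeasurable

lemma planF_fst (ε : ℝ) : (planF ε).map Prod.fst = lam := by
  rw [planF, Measure.map_map measurable_fst (pair_meas ε)]
  exact Measure.map_id

lemma planF_mem {ε : ℝ} (hε : 0 < ε) : planF ε ∈ PlanS Eopen := by
  refine ⟨inferInstance, planF_fst ε, ?_⟩
  rw [planF, Measure.map_apply (pair_meas ε) measurableSet_Eopen.compl]
  refine measure_mono_null (fun x hx => ?_) (?_ : lam (Subtype.val ⁻¹' {(1:ℝ)}) = 0)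
  · simp only [Set.mem_preimage, Set.mem_compl_iff, Eopen, Set.mem_setOf_eq, not_lt] at hx
    have hv := Tmap_val hε x
    obtain ⟨hd0, hd1⟩ := del_mem hε
    have hx1 := x.2.2
    rw [hv] at hx
    have : x.val = 1 := by nlinarith
    simpa [Set.mem_preimage] using this
  · rw [lam_apply]
    refine measure_mono_null (Set.image_preimage_subset _ _) ?_
    exact Real.volume_singleton

def Gden (ε : ℝ) : ℝ → ℝ≥0∞ :=
  (Set.Icc (del ε) 1).indicator (fun _ => ENNReal.ofReal (1 - del ε)⁻¹)

lemma Gden_meas (ε : ℝ) : Measurable (Gden ε) :=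
  measurable_const.indicator measurableSet_Icc

lemma planF_snd {ε : ℝ} (hε : 0 < ε) :
    (planF ε).map Prod.snd = lam.withDensity (Gden ε ∘ Subtype.val) := by
  obtain ⟨hd0, hd1⟩ := del_mem hε
  have hsnd : (planF ε).map Prod.snd = lam.map (Tmap ε) := by
    rw [planF, Measure.map_map measurable_snd (pair_meas ε)]
    rfl
  have key : (lam.map (Tmap ε)).map Subtype.val
      = (lam.withDensity (Gden ε ∘ Subtype.val)).map Subtype.val := by
    -- LHS
    have hL : (lam.map (Tmap ε)).map Subtype.val
        = (volume.restrict (Set.Icc (0:ℝ) 1)).map (fun x => del ε + (1 - del ε)*x) := by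
      rw [Measure.map_map measurable_subtype_coe (Tmap_continuous ε).measurable]
      have : (Subtype.val ∘ Tmap ε)
          = (fun x : ℝ => del ε + (1 - del ε)*x) ∘ (Subtype.val : UnitSq → ℝ) := by
        funext x
        exact Tmap_val hε x
      rw [this, ← Measure.map_map
        (show Measurable fun x : ℝ => del ε + (1 - del ε)*x from
          (measurable_id.const_mul _).const_add _)
        measurable_subtype_coe, map_val_lam]
    have hR : (lam.withDensity (Gden ε ∘ Subtype.val)).map Subtype.val
        = ENNReal.ofReal (1 - del ε)⁻¹ • volume.restrict (Set.Icc (del ε) 1) := by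
      rw [map_withDensity_comp lam measurable_subtype_coe (Gden_meas ε), map_val_lam,
        Gden, withDensity_indicator measurableSet_Icc, withDensity_const,
        Measure.restrict_restrict measurableSet_Icc,
        Set.inter_eq_self_of_subset_left (Set.Icc_subset_Icc (le_of_lt hd0) le_rfl)]
    rw [hL, hR, map_affine (le_of_lt hd0) hd1]
  have := congrArg (Measure.comap (Subtype.val : UnitSq → ℝ)) key
  rwa [measEmb.comap_map, measEmb.comap_map, ← hsnd] at this

lemma J_planF {ε : ℝ} (hε : 0 < ε) : J (planF ε) = 1 + ENNReal.ofReal (7/6*ε) := by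
  obtain ⟨hd0, hd1⟩ := del_mem hε
  have hδ : (0:ℝ) < 1 - del ε := by linarith
  have hsnd := planF_snd hε
  have hac : (planF ε).map Prod.snd ≪ lam := by
    rw [hsnd]; exact withDensity_absolutelyContinuous _ _
  rw [J, if_pos hac]
  have hrn : ((planF ε).map Prod.snd).rnDeriv lam =ᵐ[lam] (Gden ε ∘ Subtype.val) := by
    rw [hsnd]
    exact Measure.rnDeriv_withDensity lam ((Gden_meas ε).comp measurable_subtype_coe)
  have h1 : ∫⁻ y, ((planF ε).map Prod.snd).rnDeriv lam y ^ 2 ∂lam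
      = ∫⁻ y, (Gden ε ∘ Subtype.val) y ^ 2 ∂lam :=
    lintegral_congr_ae (hrn.mono fun y hy => by dsimp only; rw [hy])
  rw [h1]
  have h2 : ∫⁻ y, (Gden ε ∘ Subtype.val) y ^ 2 ∂lam
      = ∫⁻ t, Gden ε t ^ 2 ∂(volume.restrict (Set.Icc (0:ℝ) 1)) := by
    rw [← map_val_lam, lintegral_map ((Gden_meas ε).pow_const 2) measurable_subtype_coe]
    rfl
  rw [h2]
  have h3 : (fun t => Gden ε t ^ 2)
      = (Set.Icc (del ε) 1).indicator (fun _ => ENNReal.ofReal ((1 - del ε)⁻¹) ^ 2) := by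
    funext t
    by_cases ht : t ∈ Set.Icc (del ε) 1 <;> simp [Gden, ht, zero_pow]
  rw [h3, lintegral_indicator measurableSet_Icc, setLIntegral_const,
    Measure.restrict_apply measurableSet_Icc,
    Set.inter_eq_self_of_subset_left (Set.Icc_subset_Icc (le_of_lt hd0) le_rfl),
    Real.volume_Icc]
  rw [← ENNReal.ofReal_pow (by positivity), ← ENNReal.ofReal_mul (by positivity)]
  have : (1 - del ε)⁻¹ ^ 2 * (1 - del ε) = 1 + 7/6*ε := by
    rw [one_sub_del hε]
    have h1 : (0:ℝ) < 1 + 7/6*ε := by linarith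
    field_simp
  rw [this, ENNReal.ofReal_add one_pos.le (by linarith), ENNReal.ofReal_one]

lemma diag_meas : Measurable fun x : UnitSq => (x, x) := measurable_id.prodMk measurable_id

lemma diag_fst : diagPlan.map Prod.fst = lam := by
  rw [diagPlan, Measure.map_map measurable_fst diag_meas]
  exact Measure.map_id

lemma diag_snd : diagPlan.map Prod.snd = lam := by
  rw [diagPlan, Measure.map_map measurable_snd diag_meas]
  exact Measure.map_id

lemma measurableSet_Eclosed : MeasurableSet Eclosed :=
  measurableSet_le (continuous_subtype_val.comp continuous_fst).measurable
    (continuous_subtype_val.comp continuous_snd).measurable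

lemma diag_mem : diagPlan ∈ PlanS Eclosed := by
  refine ⟨?_, diag_fst, ?_⟩
  · haveI := Measure.isProbabilityMeasure_map (μ := lam) diag_meas.aemeasurable
    rw [diagPlan]; infer_instance
  · rw [diagPlan, Measure.map_apply diag_meas measurableSet_Eclosed.compl]
    have : (fun x : UnitSq => (x, x)) ⁻¹' Eclosedᶜ = ∅ := by
      ext x; simp [Eclosed]
    rw [this, measure_empty]

lemma J_diag : J diagPlan = 1 := by
  have hac : diagPlan.map Prod.snd ≪ lam := by rw [diag_snd]
  rw [J, if_pos hac]
  have hrn : (diagPlan.map Prod.snd).rnDeriv lam =ᵐ[lam] fun _ => 1 := by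
    rw [diag_snd]; exact Measure.rnDeriv_self lam
  calc ∫⁻ y, (diagPlan.map Prod.snd).rnDeriv lam y ^ 2 ∂lam
      = ∫⁻ _, 1 ∂lam := lintegral_congr_ae (hrn.mono fun y hy => by dsimp only; rw [hy]; simp)
  _ = 1 := by rw [lintegral_one, measure_univ]

lemma tendsto_weak (g : UnitSq × UnitSq → ℝ) (hg : Continuous g) :
    Tendsto (fun ε : ℝ => ∫ q, g q ∂(planF ε)) (nhdsWithin 0 (Set.Ioi 0))
      (nhds (∫ q, g q ∂diagPlan)) := by
  have hint : ∀ ε : ℝ, ∫ q, g q ∂(planF ε) = ∫ x, g (x, Tmap ε x) ∂lam := fun ε =>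
    integral_map (pair_meas ε).aemeasurable hg.aestronglyMeasurable
  have hintd : ∫ q, g q ∂diagPlan = ∫ x, g (x, x) ∂lam :=
    integral_map diag_meas.aemeasurable hg.aestronglyMeasurable
  simp_rw [hint, hintd]
  set G := BoundedContinuousFunction.mkOfCompact (⟨g, hg⟩ : C(UnitSq × UnitSq, ℝ)) with hG
  apply tendsto_integral_filter_of_dominated_convergence (fun _ => ‖G‖)
  · exact Filter.Eventually.of_forall fun ε =>
      (hg.comp (continuous_id.prodMk (Tmap_continuous ε))).aestronglyMeasurable
  · exact Filter.Eventually.of_forall fun ε => ae_of_all _ fun x =>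
      G.norm_coe_le_norm (x, Tmap ε x)
  · exact integrable_const _
  · refine ae_of_all _ fun x => ?_
    have hdel : Tendsto del (nhdsWithin 0 (Set.Ioi 0)) (nhds 0) := by
      have hc : ContinuousAt del 0 := by
        have : ContinuousAt (fun ε : ℝ => (7/6*ε) / (1 + 7/6*ε)) 0 :=
          (continuousAt_const.mul continuousAt_id).div
            (continuousAt_const.add (continuousAt_const.mul continuousAt_id)) (by norm_num)
        exact this
      have h0 : del 0 = 0 := by simp [del]
      have h2 := (hc.continuousWithinAt (s := Set.Ioi (0:ℝ))).tendsto
      rw [h0] at h2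
      exact h2
    have hinner : Tendsto (fun ε => del ε + (1 - del ε) * x.val)
        (nhdsWithin 0 (Set.Ioi 0)) (nhds x.val) := by
      have h2 := hdel.add
        (((tendsto_const_nhds (x := (1:ℝ)) (f := nhdsWithin (0:ℝ) (Set.Ioi 0))).sub hdel).mul
          (tendsto_const_nhds (x := (x.val : ℝ))))
      simpa using h2
    have hT : Tendsto (fun ε => Tmap ε x) (nhdsWithin 0 (Set.Ioi 0)) (nhds x) := by
      have hproj := ((continuous_projIcc (a := (0:ℝ)) (b := 1)
        (h := zero_le_one)).tendsto x.val).comp hinner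
      rwa [show Set.projIcc (0:ℝ) 1 zero_le_one x.val = x from Set.projIcc_val zero_le_one x]
        at hproj
    exact (hg.tendsto (x, x)).comp (tendsto_const_nhds.prodMk_nhds hT)

theorem failure_of_attainment_on_nonclosed_relation :
    -- (1) infimum 1 on the open relation, not attained
    (sInf (J '' PlanS Eopen) = 1 ∧ ∀ π ∈ PlanS Eopen, J π ≠ 1) ∧
    -- (2) an explicit minimizing family converging weakly to the diagonal plan
    (∃ f : ℝ → Measure (UnitSq × UnitSq),
      (∀ ε : ℝ, 0 < ε → ε < 1 / 2 →
        f ε ∈ PlanS Eopen ∧ J (f ε) = 1 + ENNReal.ofReal (7 / 6 * ε)) ∧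
      (∀ g : UnitSq × UnitSq → ℝ, Continuous g →
        Filter.Tendsto (fun ε : ℝ => ∫ q, g q ∂(f ε)) (nhdsWithin 0 (Set.Ioi 0))
          (nhds (∫ q, g q ∂diagPlan)))) ∧
    -- (3) the diagonal plan attains the minimum on the closed relation
    (diagPlan ∈ PlanS Eclosed ∧ J diagPlan = 1 ∧ ∀ π ∈ PlanS Eclosed, 1 ≤ J π) := by
  have hne : ∀ π ∈ PlanS Eopen, J π ≠ 1 := by
    rintro π ⟨hfin, hfst, hE⟩ hJ
    haveI := hfin
    exact no_plan π hfst (snd_eq_lam_of_J_eq_one π hfst hJ) hE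
  have hinf : sInf (J '' PlanS Eopen) = 1 := by
    apply le_antisymm
    · apply ENNReal.le_of_forall_pos_le_add
      intro η hη _
      set εr : ℝ := min (1/4) (6/7 * (η:ℝ)) with hεr
      have hη' : (0:ℝ) < (η:ℝ) := hη
      have hεr0 : 0 < εr := lt_min (by norm_num) (by positivity)
      have hmem : J (planF εr) ∈ J '' PlanS Eopen := ⟨planF εr, planF_mem hεr0, rfl⟩
      refine (sInf_le hmem).trans ?_
      rw [J_planF hεr0]
      have hle : ENNReal.ofReal (7/6*εr) ≤ (η : ℝ≥0∞) := by
        have h2 := min_le_right (1/4 : ℝ) (6/7 * η)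
        have h1 : 7/6*εr ≤ (η:ℝ) := by rw [hεr]; linarith
        calc ENNReal.ofReal (7/6*εr) ≤ ENNReal.ofReal (η:ℝ) := ENNReal.ofReal_le_ofReal h1
        _ = η := ENNReal.ofReal_coe_nnreal
      exact add_le_add_right hle 1
    · refine le_sInf ?_
      rintro b ⟨π, hπ, rfl⟩
      exact one_le_J π hπ.2.1
  exact ⟨⟨hinf, hne⟩,
    ⟨planF, fun ε hε _ => ⟨planF_mem hε, J_planF hε⟩, tendsto_weak⟩,
    diag_mem, J_diag, fun π hπ => one_le_J π hπ.2.1⟩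
end
end
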